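/- arXiv:2007.13864 — 9 statements merged into one kernel-verified Lean document; each statement's English description precedes it below -/
import Mathlib

section
/- Let n, k, m be integers with n ≥ m ≥ 1 and k ≥ 0. Then for all x ∈ ℝ, the m-th derivative of the polynomial B≥_{n,k} satisfies d^m/dx^m B≥_{n,k}(x) = (n)_m · Σ_{j=1}^{m} (−1)^{j+m} · C(m−1, j−1) · B=_{n−m, k−j}(x). -/
/-- `B≥_{n,k}(x) = Σ_{j=k}^{n} C(n,j)·x^j·(1−x)^{n−j}`. -/
noncomputable def Bge (n k : ℕ) (x : ℝ) : ℝ :=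
  ∑ j ∈ Finset.Icc k n, (n.choose j : ℝ) * x ^ j * (1 - x) ^ (n - j)

/-- `B=_{n,k}(x) = C(n,k)·x^k·(1−x)^{n−k}`, with the convention that it is `0`
when `k < 0` (and automatically `0` when `k > n` since the binomial coefficient vanishes). -/
noncomputable def Beq (n : ℕ) (k : ℤ) (x : ℝ) : ℝ :=
  if 0 ≤ k then (n.choose k.toNat : ℝ) * x ^ k.toNat * (1 - x) ^ (n - k.toNat) else 0

lemma beq_hasDeriv (n : ℕ) (hn : 1 ≤ n) (k : ℤ) (x : ℝ) :
    HasDerivAt (Beq n k) ((n : ℝ) * (Beq (n-1) (k-1) x - Beq (n-1) k x)) x := by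
  rcases lt_or_ge k 0 with hk | hk
  · have h1 : Beq n k = fun _ : ℝ => (0:ℝ) := by
      funext y; simp only [Beq, if_neg (by omega : ¬ (0:ℤ) ≤ k)]
    have h2 : Beq (n-1) (k-1) x = 0 := by
      simp only [Beq, if_neg (by omega : ¬ (0:ℤ) ≤ k - 1)]
    have h3 : Beq (n-1) k x = 0 := by
      simp only [Beq, if_neg (by omega : ¬ (0:ℤ) ≤ k)]
    rw [h1, h2, h3]
    simpa using hasDerivAt_const x (0:ℝ)
  · set a := k.toNat with ha
    rcases Nat.eq_zero_or_pos a with ha0 | hapos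
    · have hk0 : k = 0 := by omega
      subst hk0
      have h1 : Beq n 0 = fun y : ℝ => (1 - y) ^ n := by
        funext y; simp [Beq]
      have hd : HasDerivAt (fun y : ℝ => (1 - y) ^ n) ((n:ℝ) * (1-x)^(n-1) * (-1)) x := by
        exact (HasDerivAt.fun_pow ((hasDerivAt_id x).const_sub 1) n).congr_deriv (by ring_nf; simp)
      rw [h1]
      convert hd using 1
      have e : (0:ℤ) - 1 = -1 := by norm_num
      rw [e]
      have h2 : Beq (n-1) (-1) x = 0 := by simp [Beq]
      have h3 : Beq (n-1) 0 x = (1-x)^(n-1) := by simp [Beq]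
      rw [h2, h3]; ring
    · rcases le_or_gt a n with han | han
      · have h1 : Beq n k = fun y : ℝ => (n.choose a : ℝ) * (y ^ a * (1 - y) ^ (n - a)) := by
          funext y; simp [Beq, hk, ← ha]; ring
        have hd1 : HasDerivAt (fun y : ℝ => y ^ a) ((a:ℝ) * x ^ (a-1)) x := hasDerivAt_pow a x
        have hd2 : HasDerivAt (fun y : ℝ => (1 - y) ^ (n-a)) (((n-a:ℕ):ℝ) * (1-x)^(n-a-1) * (-1)) x := by
          exact (HasDerivAt.fun_pow ((hasDerivAt_id x).const_sub 1) (n-a)).congr_deriv (by ring_nf; simp)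
        have hd : HasDerivAt (fun y : ℝ => (n.choose a : ℝ) * (y ^ a * (1 - y) ^ (n - a))) _ x := ((hd1.fun_mul hd2).const_mul (n.choose a : ℝ))
        rw [h1]
        convert hd using 1
        have h2 : Beq (n-1) (k-1) x = ((n-1).choose (a-1) : ℝ) * x ^ (a-1) * (1-x) ^ (n-a) := by
          have ht : (k-1).toNat = a - 1 := by omega
          simp only [Beq, if_pos (by omega : (0:ℤ) ≤ k - 1), ht]
          congr 2
          omega
        have h3 : Beq (n-1) k x = ((n-1).choose a : ℝ) * x ^ a * (1-x) ^ (n-a-1) := by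
          simp only [Beq, if_pos hk, ← ha]
          congr 2
          omega
        rw [h2, h3]
        have i1 : (n:ℝ) * ((n-1).choose (a-1) : ℝ) = (n.choose a : ℝ) * a := by
          have h := Nat.add_one_mul_choose_eq (n-1) (a-1)
          rw [Nat.sub_add_cancel hn, Nat.sub_add_cancel hapos] at h
          exact_mod_cast congrArg (Nat.cast : ℕ → ℝ) h
        have i2 : ((n - a : ℕ) : ℝ) * (n.choose a : ℝ) = (n:ℝ) * ((n-1).choose a : ℝ) := by
          have h := Nat.choose_mul_succ_eq (n-1) a
          rw [Nat.sub_add_cancel hn] at h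
          have h' := congrArg (Nat.cast : ℕ → ℝ) h
          push_cast [Nat.cast_sub han] at h' ⊢
          linarith [h']
        push_cast [Nat.cast_sub han] at i2
        push_cast [Nat.cast_sub han]
        linear_combination (x^(a-1)*(1-x)^(n-a)) * i1 + (x^a*(1-x)^(n-a-1)) * i2
      · have h1 : Beq n k = fun _ : ℝ => (0:ℝ) := by
          funext y; simp [Beq, hk, ← ha, Nat.choose_eq_zero_of_lt han]
        have h2 : Beq (n-1) (k-1) x = 0 := by
          have ht : (k-1).toNat = a - 1 := by omega
          simp [Beq, if_pos (by omega : (0:ℤ) ≤ k - 1), ht,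
            Nat.choose_eq_zero_of_lt (by omega : n - 1 < a - 1)]
        have h3 : Beq (n-1) k x = 0 := by
          simp [Beq, hk, ← ha, Nat.choose_eq_zero_of_lt (by omega : n - 1 < a)]
        rw [h1, h2, h3]
        simpa using hasDerivAt_const x (0:ℝ)

lemma beq_nat (n j : ℕ) (x : ℝ) :
    Beq n (j : ℤ) x = (n.choose j : ℝ) * x ^ j * (1 - x) ^ (n - j) := by
  simp [Beq]

lemma bge_hasDeriv (n k : ℕ) (hn : 1 ≤ n) (x : ℝ) :
    HasDerivAt (Bge n k) ((n : ℝ) * Beq (n-1) ((k:ℤ)-1) x) x := by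
  have h1 : Bge n k = fun y : ℝ => ∑ j ∈ Finset.Icc k n, Beq n (j : ℤ) y := by
    funext y; simp [Bge, beq_nat]
  rw [h1]
  have hd : HasDerivAt (fun y : ℝ => ∑ j ∈ Finset.Icc k n, Beq n (j : ℤ) y)
      (∑ j ∈ Finset.Icc k n, (n : ℝ) * (Beq (n-1) ((j:ℤ)-1) x - Beq (n-1) (j:ℤ) x)) x :=
    HasDerivAt.fun_sum (fun j _ => beq_hasDeriv n hn j x)
  convert hd using 1
  rw [← Finset.mul_sum]
  congr 1
  -- telescoping
  rcases le_or_gt k n with hkn | hkn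
  · have : Finset.Icc k n = Finset.Ico k (n+1) := by rw [Finset.Ico_add_one_right_eq_Icc]
    rw [this, Finset.sum_Ico_eq_sum_range]
    symm
    have h2 : ∀ i : ℕ, Beq (n-1) ((k + i : ℕ) : ℤ) x - Beq (n-1) (((k + i : ℕ) : ℤ) - 1) x
        = - (((fun i : ℕ => Beq (n-1) ((k:ℤ) + i - 1) x) i) - ((fun i : ℕ => Beq (n-1) ((k:ℤ) + i - 1) x) (i+1))) := by
      intro i; push_cast; ring_nf
    have := Finset.sum_range_sub' (fun i : ℕ => Beq (n-1) ((k:ℤ) + i - 1) x) (n + 1 - k)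
    calc ∑ i ∈ Finset.range (n+1-k), (Beq (n-1) (((k+i:ℕ):ℤ) - 1) x - Beq (n-1) ((k+i:ℕ):ℤ) x)
        = ∑ i ∈ Finset.range (n+1-k), ((fun i : ℕ => Beq (n-1) ((k:ℤ) + i - 1) x) i - (fun i : ℕ => Beq (n-1) ((k:ℤ) + i - 1) x) (i+1)) := by
          apply Finset.sum_congr rfl; intro i _; push_cast; ring_nf
      _ = Beq (n-1) ((k:ℤ) - 1) x - Beq (n-1) ((k:ℤ) + (n+1-k:ℕ) - 1) x := by
          rw [this]; push_cast; ring_nf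
      _ = Beq (n-1) ((k:ℤ) - 1) x := by
          have he : (k:ℤ) + ((n+1-k:ℕ):ℤ) - 1 = (n:ℤ) := by
            push_cast [Nat.cast_sub (by omega : k ≤ n+1)]; ring
          rw [he]
          have : Beq (n-1) ((n:ℕ):ℤ) x = 0 := by
            rw [beq_nat, Nat.choose_eq_zero_of_lt (by omega)]; simp
          rw [this]; ring
  · rw [Finset.Icc_eq_empty (by omega)]
    have : Beq (n-1) ((k:ℤ)-1) x = 0 := by
      have ht : ((k:ℤ)-1).toNat = k - 1 := by omega
      simp [Beq, if_pos (by omega : (0:ℤ) ≤ (k:ℤ)-1), ht,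
        Nat.choose_eq_zero_of_lt (by omega : n - 1 < k - 1)]
    simp [this]

lemma sum_step (m : ℕ) (F : ℕ → ℝ) :
    ∑ i ∈ Finset.range (m+1), (-1:ℝ)^(i+m) * (m.choose i : ℝ) * (F (i+2) - F (i+1))
      = ∑ i ∈ Finset.range (m+2), (-1:ℝ)^(i+m+1) * ((m+1).choose i : ℝ) * F (i+1) := by
  set G : ℕ → ℝ := fun i => (-1:ℝ)^(i+m) * (m.choose i : ℝ) * F (i+1) with hG
  set A : ℕ → ℝ := fun i => (-1:ℝ)^(i+m) * (m.choose i : ℝ) * F (i+2) with hA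
  have hL : ∑ i ∈ Finset.range (m+1), (-1:ℝ)^(i+m) * (m.choose i : ℝ) * (F (i+2) - F (i+1))
      = (∑ i ∈ Finset.range (m+1), A i) - ∑ i ∈ Finset.range (m+1), G i := by
    rw [← Finset.sum_sub_distrib]
    refine Finset.sum_congr rfl fun i _ => by simp only [hA, hG]; ring
  have hR : ∑ i ∈ Finset.range (m+2), (-1:ℝ)^(i+m+1) * ((m+1).choose i : ℝ) * F (i+1)
      = (∑ i ∈ Finset.range (m+1), (A i - G (i+1))) + (-1:ℝ)^(m+1) * F 1 := by
    rw [Finset.sum_range_succ' (fun i => (-1:ℝ)^(i+m+1) * ((m+1).choose i : ℝ) * F (i+1)) (m+1)]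
    congr 1
    · refine Finset.sum_congr rfl fun i _ => ?_
      have hc : (m+1).choose (i+1) = m.choose i + m.choose (i+1) := Nat.choose_succ_succ m i
      simp only [hA, hG, hc]
      push_cast
      have e1 : (-1:ℝ)^(i+1+m+1) = (-1:ℝ)^(i+m) := by
        have : i+1+m+1 = (i+m)+2 := by omega
        rw [this, pow_add]; norm_num
      have e2 : (-1:ℝ)^(i+1+m) = -(-1:ℝ)^(i+m) := by
        have : i+1+m = (i+m)+1 := by omega
        rw [this, pow_succ]; ring
      rw [e1, e2]; ring
    · simp
  have hT : ∑ i ∈ Finset.range (m+1), G (i+1)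
      = (∑ i ∈ Finset.range (m+1), G i) + G (m+1) - G 0 := by
    have h1 := Finset.sum_range_succ' G (m+1)
    have h2 := Finset.sum_range_succ G (m+1)
    linarith [h1, h2]
  have hGm : G (m+1) = 0 := by simp [hG, Nat.choose_eq_zero_of_lt (by omega : m < m+1)]
  have hG0 : G 0 = (-1:ℝ)^m * F 1 := by simp [hG]
  have hpm : (-1:ℝ)^(m+1) = -(-1:ℝ)^m := by rw [pow_succ]; ring
  rw [hL, hR, Finset.sum_sub_distrib, hT, hGm, hG0, hpm]
  ring

lemma main_aux (n k : ℕ) : ∀ m, 1 ≤ m → m ≤ n → ∀ x : ℝ,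
    iteratedDeriv m (Bge n k) x =
      (n.descFactorial m : ℝ) *
        ∑ j ∈ Finset.Icc 1 m, (-1 : ℝ) ^ (j + m) * ((m - 1).choose (j - 1) : ℝ) *
          Beq (n - m) ((k : ℤ) - (j : ℤ)) x := by
  intro m
  induction m with
  | zero => intro h; exact absurd h (by omega)
  | succ m ih =>
    intro _ hmn x
    rcases Nat.eq_zero_or_pos m with rfl | hm
    · -- base case m+1 = 1
      rw [iteratedDeriv_one, (bge_hasDeriv n k (by omega) x).deriv]
      simp [Finset.Icc_self]
    · -- inductive step
      rw [iteratedDeriv_succ]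
      have hfun : iteratedDeriv m (Bge n k) = fun y =>
          (n.descFactorial m : ℝ) *
            ∑ j ∈ Finset.Icc 1 m, (-1 : ℝ) ^ (j + m) * ((m - 1).choose (j - 1) : ℝ) *
              Beq (n - m) ((k : ℤ) - (j : ℤ)) y :=
        funext fun y => ih hm (by omega) y
      rw [hfun]
      have hnm : 1 ≤ n - m := by omega
      have hd : HasDerivAt (fun y =>
          (n.descFactorial m : ℝ) *
            ∑ j ∈ Finset.Icc 1 m, (-1 : ℝ) ^ (j + m) * ((m - 1).choose (j - 1) : ℝ) *
              Beq (n - m) ((k : ℤ) - (j : ℤ)) y)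
          ((n.descFactorial m : ℝ) *
            ∑ j ∈ Finset.Icc 1 m, (-1 : ℝ) ^ (j + m) * ((m - 1).choose (j - 1) : ℝ) *
              (((n-m : ℕ) : ℝ) * (Beq (n-m-1) ((k:ℤ)-(j:ℤ)-1) x - Beq (n-m-1) ((k:ℤ)-(j:ℤ)) x))) x := by
        refine HasDerivAt.const_mul _ ?_
        refine HasDerivAt.fun_sum fun j _ => ?_
        exact (beq_hasDeriv (n-m) hnm ((k:ℤ)-(j:ℤ)) x).const_mul _
      rw [hd.deriv]
      -- now pure algebra + sum_step
      obtain ⟨m', rfl⟩ : ∃ m', m = m' + 1 := ⟨m - 1, by omega⟩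
      set F : ℕ → ℝ := fun j => Beq (n - (m'+2)) ((k:ℤ) - (j:ℕ)) x with hF
      have key : (∑ j ∈ Finset.Icc 1 (m'+1), (-1 : ℝ) ^ (j + (m'+1)) * (((m'+1) - 1).choose (j - 1) : ℝ) *
              (Beq (n-(m'+1)-1) ((k:ℤ)-(j:ℤ)-1) x - Beq (n-(m'+1)-1) ((k:ℤ)-(j:ℤ)) x))
          = ∑ j ∈ Finset.Icc 1 (m'+1+1), (-1 : ℝ) ^ (j + (m'+1+1)) * (((m'+1+1) - 1).choose (j - 1) : ℝ) *
              Beq (n - (m'+1+1)) ((k : ℤ) - (j : ℤ)) x := by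
        have hIcc : ∀ (a : ℕ) (f : ℕ → ℝ), ∑ j ∈ Finset.Icc 1 a, f j = ∑ i ∈ Finset.range a, f (1+i) := by
          intro a f
          rw [← Finset.Ico_add_one_right_eq_Icc, Finset.sum_Ico_eq_sum_range]
          simp
        rw [hIcc, hIcc]
        have hL : ∀ i ∈ Finset.range (m'+1),
            (-1 : ℝ) ^ ((1+i) + (m'+1)) * (((m'+1) - 1).choose ((1+i) - 1) : ℝ) *
              (Beq (n-(m'+1)-1) ((k:ℤ)-((1+i:ℕ):ℤ)-1) x - Beq (n-(m'+1)-1) ((k:ℤ)-((1+i:ℕ):ℤ)) x)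
            = (-1:ℝ)^(i+m') * (m'.choose i : ℝ) * (F (i+2) - F (i+1)) := by
          intro i _
          have e1 : (-1:ℝ)^((1+i)+(m'+1)) = (-1:ℝ)^(i+m') := by
            have : (1+i)+(m'+1) = (i+m')+2 := by omega
            rw [this, pow_add]; norm_num
          have e2 : (1+i) - 1 = i := by omega
          have e3 : (m'+1) - 1 = m' := by omega
          have e4 : n - (m'+1) - 1 = n - (m'+2) := by omega
          have e5 : (k:ℤ) - ((1+i:ℕ):ℤ) - 1 = (k:ℤ) - ((i+2:ℕ):ℤ) := by push_cast; ring
          have e6 : (k:ℤ) - ((1+i:ℕ):ℤ) = (k:ℤ) - ((i+1:ℕ):ℤ) := by push_cast; ring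
          rw [e1, e2, e3, e4, e5, e6]
        have hR : ∀ i ∈ Finset.range (m'+2),
            (-1 : ℝ) ^ ((1+i) + (m'+1+1)) * (((m'+1+1) - 1).choose ((1+i) - 1) : ℝ) *
              Beq (n - (m'+1+1)) ((k : ℤ) - ((1+i:ℕ):ℤ)) x
            = (-1:ℝ)^(i+m'+1) * ((m'+1).choose i : ℝ) * F (i+1) := by
          intro i _
          have e1 : (-1:ℝ)^((1+i)+(m'+1+1)) = (-1:ℝ)^(i+m'+1) := by
            have : (1+i)+(m'+1+1) = (i+m'+1)+2 := by omega
            rw [this, pow_add]; norm_num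
          have e2 : (1+i) - 1 = i := by omega
          have e3 : (m'+1+1) - 1 = m'+1 := by omega
          have e4 : n - (m'+1+1) = n - (m'+2) := by omega
          have e6 : (k:ℤ) - ((1+i:ℕ):ℤ) = (k:ℤ) - ((i+1:ℕ):ℤ) := by push_cast; ring
          rw [e1, e2, e3, e4, e6]
        rw [Finset.sum_congr rfl hL, Finset.sum_congr rfl hR]
        exact sum_step m' F
      have hpull : (∑ j ∈ Finset.Icc 1 (m'+1), (-1 : ℝ) ^ (j + (m'+1)) * (((m'+1) - 1).choose (j - 1) : ℝ) *
              (((n-(m'+1) : ℕ) : ℝ) * (Beq (n-(m'+1)-1) ((k:ℤ)-(j:ℤ)-1) x - Beq (n-(m'+1)-1) ((k:ℤ)-(j:ℤ)) x)))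
          = ((n-(m'+1) : ℕ) : ℝ) * ∑ j ∈ Finset.Icc 1 (m'+1), (-1 : ℝ) ^ (j + (m'+1)) * (((m'+1) - 1).choose (j - 1) : ℝ) *
              (Beq (n-(m'+1)-1) ((k:ℤ)-(j:ℤ)-1) x - Beq (n-(m'+1)-1) ((k:ℤ)-(j:ℤ)) x) := by
        rw [Finset.mul_sum]
        exact Finset.sum_congr rfl fun j _ => by ring
      rw [hpull, key]
      have hdf : (n.descFactorial (m'+1+1) : ℝ) = ((n - (m'+1) : ℕ) : ℝ) * (n.descFactorial (m'+1) : ℝ) := by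
        rw [Nat.descFactorial_succ]
        push_cast
        ring
      rw [hdf]
      ring

theorem stmt0 (n k m : ℕ) (hm : 1 ≤ m) (hmn : m ≤ n) (x : ℝ) :
    iteratedDeriv m (Bge n k) x =
      (n.descFactorial m : ℝ) *
        ∑ j ∈ Finset.Icc 1 m, (-1 : ℝ) ^ (j + m) * ((m - 1).choose (j - 1) : ℝ) *
          Beq (n - m) ((k : ℤ) - (j : ℤ)) x := by
  exact main_aux n k m hm hmn x
end

section
/- For all integers n ≥ 0 and 0 ≤ k ≤ n+1, and all x ∈ ℝ, the polynomial identity ((n+1−k)/(n+1)) · B≥_{n+1,k}(x) + (k/(n+1)) · B≥_{n+1,k+1}(x) = B≥_{n,k}(x) holds. (This is the one-step conditional-expectation identity showing that X_n = B≥_{n,R_n}(x) is a martingale for the Markov chain R_n with R_1 = 1 that stays at R_n with probability (n+1−R_n)/(n+1) and increases by 1 with probability R_n/(n+1).) -/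
lemma Bge_strip (n k : ℕ) (hk : k ≤ n) (x : ℝ) :
    Bge n k x = (n.choose k : ℝ) * x ^ k * (1 - x) ^ (n - k) + Bge n (k + 1) x := by
  unfold Bge
  rw [Finset.Icc_add_one_left_eq_Ioc, ← Finset.Ioc_insert_left hk,
    Finset.sum_insert Finset.left_notMem_Ioc]

lemma Bge_rec (n k : ℕ) (hk : k ≤ n) (x : ℝ) :
    Bge (n + 1) (k + 1) x = x * Bge n k x + (1 - x) * Bge n (k + 1) x := by
  have hmap : ∀ (f : ℕ → ℝ), ∑ j ∈ Finset.Icc (k + 1) (n + 1), f j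
      = ∑ j ∈ Finset.Icc k n, f (j + 1) := by
    intro f
    rw [← Finset.map_add_right_Icc k n 1, Finset.sum_map]
    rfl
  unfold Bge
  rw [hmap]
  have h1 : ∀ j ∈ Finset.Icc k n,
      (((n + 1).choose (j + 1) : ℝ)) * x ^ (j + 1) * (1 - x) ^ (n + 1 - (j + 1))
        = x * ((n.choose j : ℝ) * x ^ j * (1 - x) ^ (n - j))
          + ((n.choose (j + 1) : ℝ) * x ^ (j + 1) * (1 - x) ^ (n - j)) := by
    intro j hj
    rw [Nat.choose_succ_succ, Nat.succ_sub_succ]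
    push_cast
    ring
  rw [Finset.sum_congr rfl h1, Finset.sum_add_distrib, ← Finset.mul_sum]
  congr 1
  rw [Finset.mul_sum]
  have h2 : ∑ i ∈ Finset.Icc (k + 1) n,
      (1 - x) * ((n.choose i : ℝ) * x ^ i * (1 - x) ^ (n - i))
      = ∑ i ∈ Finset.Icc (k + 1) (n + 1),
        (n.choose i : ℝ) * x ^ i * (1 - x) ^ (n + 1 - i) := by
    rw [← Finset.Ico_insert_right (Nat.succ_le_succ hk),
      Finset.sum_insert Finset.right_notMem_Ico, Nat.succ_eq_add_one, Finset.Ico_add_one_right_eq_Icc]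
    rw [Nat.choose_succ_self]
    simp only [Nat.cast_zero, zero_mul, zero_add]
    refine Finset.sum_congr rfl fun i hi => ?_
    have hi' : i ≤ n := (Finset.mem_Icc.mp hi).2
    rw [Nat.succ_sub hi', pow_succ]
    ring
  rw [h2, hmap]
  refine Finset.sum_congr rfl fun j hj => ?_
  rw [Nat.succ_sub_succ]

theorem stmt2 (n k : ℕ) (hk : k ≤ n + 1) (x : ℝ) :
    (((n : ℝ) + 1 - (k : ℝ)) / ((n : ℝ) + 1)) * Bge (n + 1) k x
      + ((k : ℝ) / ((n : ℝ) + 1)) * Bge (n + 1) (k + 1) x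
      = Bge n k x := by
  have hn1 : ((n : ℝ) + 1) ≠ 0 := by positivity
  by_cases hkn : k ≤ n
  · have h1 := Bge_strip (n + 1) k (by omega) x
    have hT : n + 1 - k = (n - k) + 1 := by omega
    rw [hT] at h1
    have h2 := Bge_rec n k hkn x
    have h3 := Bge_strip n k hkn x
    have hc : ((n : ℝ) + 1 - (k : ℝ)) * ((n + 1).choose k : ℝ)
        = ((n : ℝ) + 1) * (n.choose k : ℝ) := by
      have h := Nat.choose_mul_succ_eq n k
      have h' : ((n.choose k : ℝ)) * ((n : ℝ) + 1)
          = (((n + 1).choose k : ℝ)) * (((n + 1 - k : ℕ) : ℝ)) := by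
        exact_mod_cast congrArg (fun t : ℕ => (t : ℝ)) h
      rw [Nat.cast_sub hk] at h'
      push_cast at h' ⊢
      linarith
    have goal' : (((n : ℝ) + 1 - (k : ℝ))) * Bge (n + 1) k x
        + ((k : ℝ)) * Bge (n + 1) (k + 1) x = ((n : ℝ) + 1) * Bge n k x := by
      linear_combination (((n : ℝ) + 1 - (k : ℝ))) * h1 + ((n : ℝ) + 1) * h2
        - ((n : ℝ) + 1) * (1 - x) * h3 + (1 - x) * x ^ k * (1 - x) ^ (n - k) * hc
    field_simp
    linarith [goal']
  · have hk' : k = n + 1 := by omega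
    subst hk'
    have e0 : Finset.Icc (n + 1 + 1) (n + 1) = ∅ := Finset.Icc_eq_empty (by omega)
    have e1 : Finset.Icc (n + 1) n = ∅ := Finset.Icc_eq_empty (by omega)
    have h0 : Bge (n + 1) (n + 1 + 1) x = 0 := by simp [Bge, e0]
    have h1 : Bge n (n + 1) x = 0 := by simp [Bge, e1]
    rw [h0, h1]
    push_cast
    ring
end

section
/- Let χ be a child distribution with finite m-th moment (m ≥ 1), let h be a threshold function, and let Ψ be the automaton distribution map of (χ,h). For each n ≥ 1 let χ_n be the truncation of χ to n, defined by χ_n(ℓ) = χ(ℓ) for 1 ≤ ℓ ≤ n, χ_n(ℓ) = 0 for ℓ > n, and χ_n(0) = χ(0) + Σ_{ℓ>n} χ(ℓ), and let Ψ_n be the automaton distribution map of (χ_n,h). Then Ψ is m times differentiable on [0,1] (derivatives within [0,1]) and Ψ_n^{(m)} converges uniformly to Ψ^{(m)} on [0,1] as n → ∞. -/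
/-- A child distribution: nonnegative, summable, total mass one. -/
def IsChildDist (χ : ℕ → ℝ) : Prop :=
  (∀ n, 0 ≤ χ n) ∧ Summable χ ∧ (∑' n, χ n) = 1

/-- The automaton distribution map of a recursive tree system `(χ, h)`. -/
noncomputable def Psi (χ : ℕ → ℝ) (h : ℕ → ℕ) (x : ℝ) : ℝ :=
  ∑' n, χ n * Bge n (h n) x

/-- The truncation of `χ` to `n`: it agrees with `χ` on `{1, …, n}`, vanishes above `n`,
and the leftover mass `Σ_{ℓ > n} χ(ℓ)` is shifted onto `0`. -/
noncomputable def trunc (χ : ℕ → ℝ) (n : ℕ) : ℕ → ℝ := fun ℓ =>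
  if ℓ = 0 then χ 0 + ∑' k : ℕ, χ (n + 1 + k)
  else if ℓ ≤ n then χ ℓ else 0

open Finset Polynomial Filter

/-- The polynomial whose evaluation is `Bge ℓ k`. -/
noncomputable def Qp (k ℓ : ℕ) : Polynomial ℝ :=
  ∑ j ∈ Finset.Icc k ℓ, bernsteinPolynomial ℝ ℓ j

lemma Bge_eq_eval (ℓ k : ℕ) (x : ℝ) : Bge ℓ k x = (Qp k ℓ).eval x := by
  simp [Bge, Qp, bernsteinPolynomial, eval_finset_sum]

lemma bern_eval_nonneg (n j : ℕ) {x : ℝ} (hx : x ∈ Set.Icc (0:ℝ) 1) :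
    0 ≤ (bernsteinPolynomial ℝ n j).eval x := by
  obtain ⟨h0, h1⟩ := hx
  simp only [bernsteinPolynomial, eval_mul, eval_pow, eval_natCast, eval_X, eval_sub, eval_one]
  have : (0:ℝ) ≤ 1 - x := by linarith
  positivity

lemma bern_sum_eval_le_one (n : ℕ) (t : Finset ℕ) {x : ℝ} (hx : x ∈ Set.Icc (0:ℝ) 1) :
    ∑ j ∈ t, (bernsteinPolynomial ℝ n j).eval x ≤ 1 := by
  have h1 : ∑ j ∈ t, (bernsteinPolynomial ℝ n j).eval x
      = ∑ j ∈ t ∩ Finset.range (n+1), (bernsteinPolynomial ℝ n j).eval x := by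
    refine (Finset.sum_subset Finset.inter_subset_left ?_).symm
    intro j hj hj'
    have : n < j := by
      by_contra hle
      exact hj' (Finset.mem_inter.mpr ⟨hj, Finset.mem_range.mpr (by omega)⟩)
    rw [bernsteinPolynomial.eq_zero_of_lt ℝ this, eval_zero]
  rw [h1]
  have h2 : ∑ j ∈ t ∩ Finset.range (n+1), (bernsteinPolynomial ℝ n j).eval x
      ≤ ∑ j ∈ Finset.range (n+1), (bernsteinPolynomial ℝ n j).eval x := by
    refine Finset.sum_le_sum_of_subset_of_nonneg Finset.inter_subset_right ?_
    exact fun j _ _ => bern_eval_nonneg n j hx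
  have h3 : ∑ j ∈ Finset.range (n+1), (bernsteinPolynomial ℝ n j).eval x = 1 := by
    rw [← Polynomial.eval_finset_sum, bernsteinPolynomial.sum, eval_one]
  linarith

lemma bern_iter_bound (i : ℕ) : ∀ (n j : ℕ) {x : ℝ}, x ∈ Set.Icc (0:ℝ) 1 →
    |((Polynomial.derivative)^[i] (bernsteinPolynomial ℝ n j)).eval x| ≤ (2*(n:ℝ))^i := by
  induction i with
  | zero =>
    intro n j x hx
    simp only [Function.iterate_zero, id_eq, pow_zero]
    rw [abs_le]
    constructor
    · linarith [bern_eval_nonneg n j hx]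
    · have := bern_sum_eval_le_one n {j} hx
      simpa using this
  | succ i ih =>
    intro n j x hx
    have hcast : ∀ (p : ℝ[X]), (Polynomial.derivative)^[i] ((n:ℝ[X]) * p)
        = (n:ℝ[X]) * (Polynomial.derivative)^[i] p := by
      intro p
      have : (n:ℝ[X]) = Polynomial.C (n:ℝ) := by simp
      rw [this, Polynomial.iterate_derivative_C_mul]
    have harith : (n:ℝ) * ((2*((n-1:ℕ):ℝ))^i + (2*((n-1:ℕ):ℝ))^i) ≤ (2*(n:ℝ))^(i+1) := by
      have h1 : (2*((n-1:ℕ):ℝ))^i ≤ (2*(n:ℝ))^i := by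
        apply pow_le_pow_left₀ (by positivity)
        have : ((n-1:ℕ):ℝ) ≤ (n:ℝ) := by exact_mod_cast Nat.sub_le n 1
        linarith
      have h2 : (0:ℝ) ≤ (2*(n:ℝ))^i := by positivity
      have h3 : (0:ℝ) ≤ (n:ℝ) := Nat.cast_nonneg n
      calc (n:ℝ) * ((2*((n-1:ℕ):ℝ))^i + (2*((n-1:ℕ):ℝ))^i)
          ≤ (n:ℝ) * ((2*(n:ℝ))^i + (2*(n:ℝ))^i) := by
            apply mul_le_mul_of_nonneg_left (by linarith) h3
        _ = 2*(n:ℝ) * (2*(n:ℝ))^i := by ring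
        _ = (2*(n:ℝ))^(i+1) := by ring
    rw [Function.iterate_succ_apply]
    cases j with
    | zero =>
      rw [bernsteinPolynomial.derivative_zero, neg_mul, ← mul_neg, hcast,
        Polynomial.iterate_derivative_neg, eval_mul, eval_natCast, eval_neg, abs_mul, abs_neg,
        Nat.abs_cast]
      have b1 := ih (n-1) 0 hx
      have hterm : (0:ℝ) ≤ (2*((n-1:ℕ):ℝ))^i := by positivity
      calc (n:ℝ) * |((Polynomial.derivative)^[i] (bernsteinPolynomial ℝ (n-1) 0)).eval x|
          ≤ (n:ℝ) * ((2*((n-1:ℕ):ℝ))^i + (2*((n-1:ℕ):ℝ))^i) := by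
            apply mul_le_mul_of_nonneg_left (by linarith) (Nat.cast_nonneg n)
        _ ≤ (2*(n:ℝ))^(i+1) := harith
    | succ ν =>
      rw [bernsteinPolynomial.derivative_succ, hcast, eval_mul, eval_natCast,
        Polynomial.iterate_derivative_sub, eval_sub]
      have b1 := ih (n-1) ν hx
      have b2 := ih (n-1) (ν+1) hx
      calc |(n:ℝ) * (((Polynomial.derivative)^[i] (bernsteinPolynomial ℝ (n-1) ν)).eval x
            - ((Polynomial.derivative)^[i] (bernsteinPolynomial ℝ (n-1) (ν+1))).eval x)|
          ≤ (n:ℝ) * ((2*((n-1:ℕ):ℝ))^i + (2*((n-1:ℕ):ℝ))^i) := by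
            rw [abs_mul, Nat.abs_cast]
            apply mul_le_mul_of_nonneg_left _ (Nat.cast_nonneg n)
            calc |_ - _| ≤ |_| + |_| := abs_sub _ _
              _ ≤ _ := add_le_add b1 b2
        _ ≤ (2*(n:ℝ))^(i+1) := harith

lemma qp_derivative (n k : ℕ) (hk : 1 ≤ k) :
    Polynomial.derivative (Qp k n) = (n : ℝ[X]) * bernsteinPolynomial ℝ (n-1) (k-1) := by
  rw [Qp]
  by_cases hkn : k ≤ n
  · rw [map_sum]
    have hterm : ∀ j ∈ Finset.Icc k n, Polynomial.derivative (bernsteinPolynomial ℝ n j)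
        = (n : ℝ[X]) * (bernsteinPolynomial ℝ (n-1) (j-1) - bernsteinPolynomial ℝ (n-1) j) := by
      intro j hj
      have hj1 : 1 ≤ j := le_trans hk (Finset.mem_Icc.mp hj).1
      obtain ⟨ν, rfl⟩ : ∃ ν, j = ν + 1 := ⟨j - 1, by omega⟩
      simpa using bernsteinPolynomial.derivative_succ ℝ n ν
    rw [Finset.sum_congr rfl hterm, ← Finset.mul_sum]
    congr 1
    have : Finset.Icc k n = Finset.Ico k (n+1) := rfl
    rw [this, Finset.sum_Ico_eq_sum_range]
    have hre : ∀ i, bernsteinPolynomial ℝ (n-1) (k + i - 1) - bernsteinPolynomial ℝ (n-1) (k+i)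
        = (fun t => bernsteinPolynomial ℝ (n-1) (k - 1 + t)) i
          - (fun t => bernsteinPolynomial ℝ (n-1) (k - 1 + t)) (i+1) := by
      intro i
      congr 2 <;> omega
    calc ∑ i ∈ Finset.range (n + 1 - k),
          (bernsteinPolynomial ℝ (n-1) (k + i - 1) - bernsteinPolynomial ℝ (n-1) (k+i))
        = ∑ i ∈ Finset.range (n + 1 - k), ((fun t => bernsteinPolynomial ℝ (n-1) (k - 1 + t)) i
          - (fun t => bernsteinPolynomial ℝ (n-1) (k - 1 + t)) (i+1)) := by
          exact Finset.sum_congr rfl fun i _ => hre i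
      _ = bernsteinPolynomial ℝ (n-1) (k - 1 + 0)
          - bernsteinPolynomial ℝ (n-1) (k - 1 + (n + 1 - k)) := Finset.sum_range_sub' _ _
      _ = bernsteinPolynomial ℝ (n-1) (k-1) := by
          have h1 : k - 1 + (n + 1 - k) = n := by omega
          rw [add_zero, h1, show bernsteinPolynomial ℝ (n-1) n = 0 from
            bernsteinPolynomial.eq_zero_of_lt ℝ (n := n-1) (ν := n) (by omega), sub_zero]
  · rw [Finset.Icc_eq_empty hkn, Finset.sum_empty, map_zero]
    rcases Nat.eq_zero_or_pos n with hn | hn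
    · rw [hn]; simp
    · have hlt : n - 1 < k - 1 := by omega
      rw [bernsteinPolynomial.eq_zero_of_lt ℝ hlt, mul_zero]

/-- Uniform bound on the iterated derivatives of `Qp (h ℓ) ℓ` on `[0,1]`. -/
lemma qp_iter_bound (i ℓ k : ℕ) (hk : 1 ≤ k) {x : ℝ} (hx : x ∈ Set.Icc (0:ℝ) 1) :
    |((Polynomial.derivative)^[i] (Qp k ℓ)).eval x| ≤ (2*(ℓ:ℝ))^i := by
  cases i with
  | zero =>
    simp only [Function.iterate_zero, id_eq, pow_zero]
    rw [abs_le, Qp, eval_finset_sum]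
    constructor
    · refine neg_nonpos.mpr (by norm_num) |>.trans ?_
      exact Finset.sum_nonneg fun j _ => bern_eval_nonneg ℓ j hx
    · exact bern_sum_eval_le_one ℓ _ hx
  | succ i =>
    rw [Function.iterate_succ_apply, qp_derivative ℓ k hk]
    have hcast : (ℓ:ℝ[X]) = Polynomial.C (ℓ:ℝ) := by simp
    rw [hcast, Polynomial.iterate_derivative_C_mul, eval_mul, eval_C, abs_mul, Nat.abs_cast]
    have b1 := bern_iter_bound i (ℓ-1) (k-1) hx
    have h1 : (2*((ℓ-1:ℕ):ℝ))^i ≤ (2*(ℓ:ℝ))^i := by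
      apply pow_le_pow_left₀ (by positivity)
      have : ((ℓ-1:ℕ):ℝ) ≤ (ℓ:ℝ) := by exact_mod_cast Nat.sub_le ℓ 1
      linarith
    have h2 : (0:ℝ) ≤ (2*(ℓ:ℝ))^i := by positivity
    calc (ℓ:ℝ) * |((Polynomial.derivative)^[i] (bernsteinPolynomial ℝ (ℓ-1) (k-1))).eval x|
        ≤ (ℓ:ℝ) * (2*(ℓ:ℝ))^i := by
          apply mul_le_mul_of_nonneg_left (le_trans b1 h1) (Nat.cast_nonneg ℓ)
      _ ≤ 2*(ℓ:ℝ) * (2*(ℓ:ℝ))^i := by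
          apply mul_le_mul_of_nonneg_right (by linarith [Nat.cast_nonneg (α := ℝ) ℓ]) h2
      _ = (2*(ℓ:ℝ))^(i+1) := by ring

lemma hasDerivWithinAt_of_tuo {s : Set ℝ} (hs : Convex ℝ s) {f f' : ℕ → ℝ → ℝ} {g g' : ℝ → ℝ}
    (hf : ∀ n, ∀ x ∈ s, HasDerivWithinAt (f n) (f' n x) s x)
    (hf' : TendstoUniformlyOn f' g' Filter.atTop s)
    (hfg : ∀ x ∈ s, Filter.Tendsto (fun n => f n x) Filter.atTop (nhds (g x)))
    {x : ℝ} (hx : x ∈ s) : HasDerivWithinAt g (g' x) s x := by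
  rw [hasDerivWithinAt_iff_isLittleO, Asymptotics.isLittleO_iff]
  intro c hc
  have h4 : (0:ℝ) < c/4 := by linarith
  obtain ⟨N, hN⟩ : ∃ N, ∀ n ≥ N, ∀ z ∈ s, dist (g' z) (f' n z) < c/4 :=
    Filter.eventually_atTop.mp ((Metric.tendstoUniformlyOn_iff.mp hf') (c/4) h4)
  have key : ∀ y ∈ s, ‖(g y - f N y) - (g x - f N x)‖ ≤ c/2 * ‖y - x‖ := by
    intro y hy
    have hk : ∀ k ≥ N, ‖(f k y - f N y) - (f k x - f N x)‖ ≤ c/2 * ‖y - x‖ := by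
      intro k hkN
      refine hs.norm_image_sub_le_of_norm_hasDerivWithin_le
        (f := fun z => f k z - f N z) (f' := fun z => f' k z - f' N z)
        (fun z hz => (hf k z hz).sub (hf N z hz)) (fun z hz => ?_) hx hy
      have d1 := hN k hkN z hz
      have d2 := hN N le_rfl z hz
      have : ‖f' k z - f' N z‖ ≤ dist (f' k z) (g' z) + dist (g' z) (f' N z) := by
        rw [← dist_eq_norm]; exact dist_triangle _ _ _
      rw [dist_comm (f' k z)] at this
      linarith
    have hlim : Filter.Tendsto (fun k => ‖(f k y - f N y) - (f k x - f N x)‖)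
        Filter.atTop (nhds ‖(g y - f N y) - (g x - f N x)‖) :=
      (((hfg y hy).sub tendsto_const_nhds).sub ((hfg x hx).sub tendsto_const_nhds)).norm
    exact le_of_tendsto hlim (Filter.eventually_atTop.mpr ⟨N, hk⟩)
  have hN1 : ‖g' x - f' N x‖ ≤ c/4 := by
    have := hN N le_rfl x hx
    rw [dist_eq_norm] at this
    linarith
  have hlittle := hf N x hx
  rw [hasDerivWithinAt_iff_isLittleO, Asymptotics.isLittleO_iff] at hlittle
  filter_upwards [hlittle h4, self_mem_nhdsWithin] with y h1 hy
  have e : g y - g x - (y - x) • g' x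
      = (((g y - f N y) - (g x - f N x)) + (f N y - f N x - (y-x) • f' N x))
        + (y - x) • (f' N x - g' x) := by
    simp only [smul_eq_mul]; ring
  rw [e]
  have t1 := key y hy
  have t2 : ‖(y - x) • (f' N x - g' x)‖ ≤ ‖y - x‖ * (c/4) := by
    rw [smul_eq_mul, norm_mul]
    exact mul_le_mul_of_nonneg_left (by rw [norm_sub_rev]; exact hN1) (norm_nonneg _)
  calc ‖_ + (y - x) • (f' N x - g' x)‖
      ≤ ‖((g y - f N y) - (g x - f N x)) + (f N y - f N x - (y-x) • f' N x)‖
        + ‖(y - x) • (f' N x - g' x)‖ := norm_add_le _ _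
    _ ≤ (‖(g y - f N y) - (g x - f N x)‖ + ‖f N y - f N x - (y-x) • f' N x‖)
        + ‖(y - x) • (f' N x - g' x)‖ := by gcongr; exact norm_add_le _ _
    _ ≤ (c/2 * ‖y - x‖ + c/4 * ‖y - x‖) + ‖y - x‖ * (c/4) := by gcongr
    _ = c * ‖y - x‖ := by ring

lemma tuo_shift {F : ℕ → ℝ → ℝ} {f : ℝ → ℝ} {s : Set ℝ}
    (h : TendstoUniformlyOn F f Filter.atTop s) :
    TendstoUniformlyOn (fun n => F (n+1)) f Filter.atTop s :=
  fun u hu => (tendsto_add_atTop_nat 1).eventually (h u hu)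

set_option maxHeartbeats 1000000 in
theorem stmt6 (m : ℕ) (hm : 1 ≤ m) (χ : ℕ → ℝ) (h : ℕ → ℕ)
    (hχ : IsChildDist χ)
    (hmom : Summable fun n => χ n * (n : ℝ) ^ m)
    (hh : ∀ n, 1 ≤ h n) :
    ContDiffOn ℝ (m : ℕ∞) (Psi χ h) (Set.Icc (0 : ℝ) 1) ∧
    TendstoUniformlyOn
      (fun n x => iteratedDerivWithin m (Psi (trunc χ n) h) (Set.Icc (0 : ℝ) 1) x)
      (fun x => iteratedDerivWithin m (Psi χ h) (Set.Icc (0 : ℝ) 1) x)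
      Filter.atTop (Set.Icc (0 : ℝ) 1) := by
  obtain ⟨hpos, hsummable, -⟩ := hχ
  set s : Set ℝ := Set.Icc (0:ℝ) 1 with hs_def
  have hsU : UniqueDiffOn ℝ s := uniqueDiffOn_Icc one_pos
  have hsC : Convex ℝ s := convex_Icc 0 1
  -- the iterated-derivative polynomials
  set d : ℕ → ℕ → Polynomial ℝ := fun i ℓ => (Polynomial.derivative)^[i] (Qp (h ℓ) ℓ) with hd_def
  -- the termwise bound
  have hb : ∀ i ℓ, ∀ x ∈ s, |(d i ℓ).eval x| ≤ (2*(ℓ:ℝ))^i :=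
    fun i ℓ x hx => qp_iter_bound i ℓ (h ℓ) (hh ℓ) hx
  -- summability of the majorant series
  have hu : ∀ i ≤ m, Summable (fun ℓ => χ ℓ * (2*(ℓ:ℝ))^i) := by
    intro i hi
    refine Summable.of_nonneg_of_le
      (f := fun ℓ => 2^m * (χ ℓ * 1 + χ ℓ * (ℓ:ℝ)^m))
      (fun ℓ => mul_nonneg (hpos ℓ) (by positivity)) ?_
      (((hsummable.mul_right 1).add hmom).mul_left _)
    · intro ℓ
      have hℓpow : (ℓ:ℝ)^i ≤ 1 + (ℓ:ℝ)^m := by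
        rcases Nat.eq_zero_or_pos ℓ with h0 | h0
        · subst h0
          rcases Nat.eq_zero_or_pos i with h0' | h0'
          · subst h0'; simp [zero_pow (show m ≠ 0 by omega)]
          · rw [Nat.cast_zero, zero_pow (by omega)]; positivity
        · have h1 : (1:ℝ) ≤ (ℓ:ℝ) := by exact_mod_cast h0
          have := pow_le_pow_right₀ h1 hi
          nlinarith [pow_nonneg (le_trans zero_le_one h1) m]
      have h2i : (2:ℝ)^i ≤ 2^m := pow_le_pow_right₀ one_le_two hi
      have hnn : (0:ℝ) ≤ (ℓ:ℝ)^i := by positivity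
      calc χ ℓ * (2*(ℓ:ℝ))^i = χ ℓ * (2^i * (ℓ:ℝ)^i) := by rw [mul_pow]
        _ ≤ χ ℓ * (2^m * (1 + (ℓ:ℝ)^m)) := by
            apply mul_le_mul_of_nonneg_left _ (hpos ℓ)
            apply mul_le_mul h2i hℓpow hnn (by positivity)
        _ = 2^m * (χ ℓ * 1 + χ ℓ * (ℓ:ℝ)^m) := by ring
  -- summability of the termwise series
  have hsum : ∀ i ≤ m, ∀ (x : ℝ), x ∈ s → Summable (fun ℓ => χ ℓ * (d i ℓ).eval x) := by
    intro i hi x hx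
    apply Summable.of_norm_bounded (hu i hi)
    intro ℓ
    rw [norm_mul, Real.norm_eq_abs, Real.norm_eq_abs, abs_of_nonneg (hpos ℓ)]
    exact mul_le_mul_of_nonneg_left (hb i ℓ x hx) (hpos ℓ)
  -- the limit functions and partial sums
  set g : ℕ → ℝ → ℝ := fun i x => ∑' ℓ, χ ℓ * (d i ℓ).eval x with hg_def
  set S : ℕ → ℕ → ℝ → ℝ := fun i n x => ∑ ℓ ∈ Finset.range (n+1), χ ℓ * (d i ℓ).eval x
    with hS_def
  -- uniform convergence of partial sums
  have htu : ∀ i ≤ m, TendstoUniformlyOn (fun n x => S i n x) (g i) Filter.atTop s := by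
    intro i hi
    have hbase := tendstoUniformlyOn_tsum_nat (hu i hi)
      (f := fun ℓ x => χ ℓ * (d i ℓ).eval x) (s := s) ?_
    · exact tuo_shift hbase
    · intro ℓ x hx
      rw [norm_mul, Real.norm_eq_abs, Real.norm_eq_abs, abs_of_nonneg (hpos ℓ)]
      exact mul_le_mul_of_nonneg_left (hb i ℓ x hx) (hpos ℓ)
  -- derivatives of partial sums
  have hS' : ∀ i n (x : ℝ), HasDerivAt (fun y => S i n y) (S (i+1) n x) x := by
    intro i n x
    apply HasDerivAt.fun_sum
    intro ℓ _
    have : d (i+1) ℓ = Polynomial.derivative (d i ℓ) := Function.iterate_succ_apply' _ _ _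
    rw [this]
    exact (Polynomial.hasDerivAt (d i ℓ) x).const_mul (χ ℓ)
  -- pointwise convergence
  have hpt : ∀ i ≤ m, ∀ x ∈ s, Filter.Tendsto (fun n => S i n x) Filter.atTop (nhds (g i x)) := by
    intro i hi x hx
    have h1 := (hsum i hi x hx).hasSum.tendsto_sum_nat
    exact h1.comp (tendsto_add_atTop_nat 1)
  -- term-by-term differentiation of the limit
  have hg' : ∀ i, i < m → ∀ x ∈ s, HasDerivWithinAt (g i) (g (i+1) x) s x := by
    intro i hi x hx
    exact hasDerivWithinAt_of_tuo hsC
      (fun n y hy => (hS' i n y).hasDerivWithinAt)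
      (htu (i+1) (by omega)) (hpt i (by omega)) hx
  have hdw : ∀ i, i < m → ∀ x ∈ s, derivWithin (g i) s x = g (i+1) x :=
    fun i hi x hx => (hg' i hi x hx).derivWithin (hsU x hx)
  -- smoothness
  have hcd : ∀ k i, i + k ≤ m → ContDiffOn ℝ (k : ℕ∞) (g i) s := by
    intro k
    induction k with
    | zero =>
      intro i hi
      refine contDiffOn_zero.mpr ?_
      apply (htu i (by omega)).continuousOn
      refine Filter.Frequently.of_forall fun n => ?_
      apply continuousOn_finset_sum
      intro ℓ _
      exact (continuous_const.mul (Polynomial.continuous (d i ℓ))).continuousOn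
    | succ k ih =>
      intro i hi
      push_cast
      rw [contDiffOn_succ_iff_derivWithin hsU]
      refine ⟨fun x hx => (hg' i (by omega) x hx).differentiableWithinAt, ?_, ?_⟩
      · intro hω; exact absurd hω (by simp)
      · exact (ih (i+1) (by omega)).congr fun x hx => (hdw i (by omega) x hx)
  -- Psi χ h is g 0
  have hPsi : Psi χ h = g 0 := by
    funext x
    simp only [hg_def, Psi, hd_def, Function.iterate_zero, id_eq]
    exact tsum_congr fun ℓ => by rw [Bge_eq_eval]
  -- the iterated derivatives of g 0 within s
  have hiter : ∀ j ≤ m, Set.EqOn (iteratedDerivWithin j (g 0) s) (g j) s := by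
    intro j
    induction j with
    | zero => intro _ ; rw [iteratedDerivWithin_zero]; exact fun x _ => rfl
    | succ j ih =>
      intro hj x hx
      rw [iteratedDerivWithin_succ,
        derivWithin_congr (ih (by omega)) (ih (by omega) hx)]
      exact hdw j (by omega) x hx
  -- the iterated derivatives of the partial sums within s
  have hiterS : ∀ (n : ℕ) (j : ℕ), Set.EqOn (iteratedDerivWithin j (fun x => S 0 n x) s)
      (fun x => S j n x) s := by
    intro n j
    induction j with
    | zero => rw [iteratedDerivWithin_zero]; exact fun x _ => rfl
    | succ j ih =>
      intro x hx
      rw [iteratedDerivWithin_succ,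
        derivWithin_congr ih (ih hx)]
      exact ((hS' j n x).hasDerivWithinAt).derivWithin (hsU x hx)
  -- Psi (trunc χ n) h is the partial sum S 0 n
  have htr : ∀ n : ℕ, Psi (trunc χ n) h = fun x => S 0 n x := by
    intro n
    funext x
    have hBge0 : Bge 0 (h 0) x = 0 := by
      rw [Bge, Finset.Icc_eq_empty (by have := hh 0; omega), Finset.sum_empty]
    rw [Psi, tsum_eq_sum (s := Finset.range (n+1)) ?_]
    · apply Finset.sum_congr rfl
      intro ℓ hℓ
      have hℓn : ℓ ≤ n := by have := Finset.mem_range.mp hℓ; omega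
      rcases Nat.eq_zero_or_pos ℓ with h0 | h0
      · subst h0
        have hz : (d 0 0).eval x = 0 := by
          show (Qp (h 0) 0).eval x = 0
          rw [← Bge_eq_eval]; exact hBge0
        rw [hBge0, mul_zero, hz, mul_zero]
      · show trunc χ n ℓ * Bge ℓ (h ℓ) x = χ ℓ * (d 0 ℓ).eval x
        have hz : (d 0 ℓ).eval x = Bge ℓ (h ℓ) x := by
          show (Qp (h ℓ) ℓ).eval x = Bge ℓ (h ℓ) x
          rw [← Bge_eq_eval]
        rw [hz, trunc, if_neg (by omega), if_pos hℓn]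
    · intro ℓ hℓ
      have : ¬ ℓ ≤ n := fun hc => hℓ (Finset.mem_range.mpr (by omega))
      have hℓ0 : ℓ ≠ 0 := by omega
      rw [trunc, if_neg hℓ0, if_neg this, zero_mul]
  constructor
  · rw [hPsi]
    exact hcd m 0 (by omega)
  · rw [hPsi]
    have step1 : TendstoUniformlyOn (fun n x => S m n x)
        (fun x => iteratedDerivWithin m (g 0) s x) Filter.atTop s :=
      (htu m le_rfl).congr_right fun x hx => (hiter m le_rfl hx).symm
    apply step1.congr
    filter_upwards with n
    intro x hx
    rw [htr n]
    exact (hiterS n m hx).symm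
end

section
/- Fix m ≥ 1 and a threshold function h. Let χ and χ_1, χ_2, χ_3, … be child distributions, each with finite m-th moment, such that Σ_{ℓ=1}^{∞} ℓ^m · |χ_j(ℓ) − χ(ℓ)| → 0 as j → ∞. Let Ψ and Ψ_j be the automaton distribution maps of (χ,h) and (χ_j,h). Then Ψ_j^{(m)}(0) → Ψ^{(m)}(0) as j → ∞; that is, the map χ ↦ Ψ^{(m)}(0) is sequentially continuous with respect to the metric d_m(χ_1,χ_2) = Σ_{k=1}^∞ k^m·|χ_1(k)−χ_2(k)|. -/
open Finset Set Filter Topology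


noncomputable def bern (n : ℕ) (j : ℤ) (x : ℝ) : ℝ :=
  if 0 ≤ j ∧ j ≤ (n : ℤ) then (n.choose j.toNat : ℝ) * x ^ j.toNat * (1 - x) ^ (n - j.toNat) else 0

lemma bern_nat (n a : ℕ) (ha : a ≤ n) (x : ℝ) :
    bern n (a : ℤ) x = (n.choose a : ℝ) * x ^ a * (1 - x) ^ (n - a) := by
  unfold bern
  rw [if_pos ⟨Int.natCast_nonneg a, by exact_mod_cast ha⟩]
  simp

lemma bern_of_neg {n : ℕ} {j : ℤ} (hj : j < 0) (x : ℝ) : bern n j x = 0 := by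
  unfold bern; rw [if_neg]; push_neg; intro h; omega

lemma bern_of_gt {n : ℕ} {j : ℤ} (hj : (n : ℤ) < j) (x : ℝ) : bern n j x = 0 := by
  unfold bern; rw [if_neg]; push_neg; intro h; omega

lemma bern_hasDerivAt (n : ℕ) (j : ℤ) (x : ℝ) :
    HasDerivAt (fun y => bern n j y)
      ((n : ℝ) * (bern (n-1) (j-1) x - bern (n-1) j x)) x := by
  have h1x : HasDerivAt (fun y : ℝ => 1 - y) (-1) x := (hasDerivAt_id x).const_sub 1
  cases n with
  | zero =>
    have : (fun y => bern 0 j y) = fun _ => bern 0 j x := by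
      funext y; unfold bern; split
      · rename_i hcond
        have hj0 : j.toNat = 0 := by omega
        simp [hj0]
      · rfl
    rw [this]
    simpa using hasDerivAt_const x (bern 0 j x)
  | succ s =>
    simp only [Nat.add_sub_cancel]
    by_cases h0 : 0 ≤ j
    · by_cases h1 : j ≤ (s + 1 : ℤ)
      · obtain ⟨a, rfl⟩ : ∃ a : ℕ, j = (a : ℤ) := ⟨j.toNat, (Int.toNat_of_nonneg h0).symm⟩
        have han : a ≤ s + 1 := by exact_mod_cast h1
        have hb : (fun y => bern (s+1) (a : ℤ) y)
            = fun y => ((s+1).choose a : ℝ) * y ^ a * (1 - y) ^ (s + 1 - a) :=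
          funext fun y => bern_nat (s+1) a han y
        rw [hb]
        cases a with
        | zero =>
          have hf : (fun y : ℝ => ((s+1).choose 0 : ℝ) * y ^ 0 * (1 - y) ^ (s + 1 - 0))
              = fun y : ℝ => (1 - y) ^ (s+1) := by funext y; simp
          rw [hf]
          have hd : HasDerivAt (fun y : ℝ => (1 - y) ^ (s+1))
              ((s+1 : ℕ) * (1 - x) ^ (s + 1 - 1) * (-1)) x := h1x.pow (s+1)
          convert hd using 1
          have e0 : ((0:ℕ) : ℤ) - 1 = (-1 : ℤ) := by norm_num
          rw [e0, bern_of_neg (by norm_num), bern_nat s 0 (Nat.zero_le s)]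
          simp only [Nat.add_sub_cancel, Nat.choose_zero_right, Nat.cast_one, pow_zero,
            Nat.sub_zero, Nat.cast_ofNat]
          push_cast
          ring
        | succ b =>
          by_cases hbs : b + 1 = s + 1
          · have hbs' : b = s := by omega
            subst hbs'
            have hf : (fun y : ℝ => ((b+1).choose (b+1) : ℝ) * y ^ (b+1) * (1 - y) ^ (b + 1 - (b+1)))
                = fun y : ℝ => y ^ (b+1) := by funext y; simp
            rw [hf]
            have hd := hasDerivAt_pow (b+1) x
            refine hd.congr_deriv (Eq.symm ?_)
            have e1 : ((b+1:ℕ) : ℤ) - 1 = (b : ℤ) := by push_cast; ring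
            have t1 : bern b ((b:ℕ) : ℤ) x = x ^ b := by
              rw [bern_nat b b le_rfl]; simp
            have t2 : bern b (((b+1:ℕ)) : ℤ) x = 0 :=
              bern_of_gt (by exact_mod_cast Nat.lt_succ_self b) x
            rw [e1, t1, t2]
            simp only [Nat.add_sub_cancel]
            push_cast
            ring
          · have hblt : b + 1 ≤ s := by omega
            obtain ⟨c, hc⟩ : ∃ c, s - b = c + 1 :=
              Nat.exists_eq_succ_of_ne_zero (by omega)
            have hexp : s + 1 - (b+1) = c + 1 := by omega
            have hexp2 : s - (b+1) = c := by omega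
            have hf : (fun y : ℝ => ((s+1).choose (b+1) : ℝ) * y ^ (b+1) * (1 - y) ^ (s + 1 - (b+1)))
                = fun y : ℝ => ((s+1).choose (b+1) : ℝ) * (y ^ (b+1) * (1 - y) ^ (c+1)) := by
              funext y; rw [hexp]; ring
            rw [hf]
            have hd1 := hasDerivAt_pow (b+1) x
            have hd2 : HasDerivAt (fun y : ℝ => (1 - y) ^ (c+1))
                ((c+1 : ℕ) * (1 - x) ^ (c + 1 - 1) * (-1)) x := h1x.pow (c+1)
            have hd := (hd1.mul hd2).const_mul (((s+1).choose (b+1) : ℝ))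
            refine hd.congr_deriv (Eq.symm ?_)
            have e1 : ((b+1:ℕ) : ℤ) - 1 = (b : ℤ) := by push_cast; ring
            rw [e1, bern_nat s b (by omega), bern_nat s (b+1) (by omega), hc, hexp2]
            have key1 : ((s+1) * s.choose b : ℝ) = ((s+1).choose (b+1) : ℝ) * (b+1) := by
              exact_mod_cast congrArg Nat.cast (Nat.add_one_mul_choose_eq s b)
            have key2 : ((s+1).choose (b+1) : ℝ) * (c+1) = ((s+1) : ℝ) * s.choose (b+1) := by
              have h2 : (s+1).choose (b+1) * ((s+1) - (b+1)) = (s+1) * s.choose (b+1) := by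
                rw [← Nat.choose_succ_right_eq]
                exact (Nat.add_one_mul_choose_eq s (b+1)).symm
              have h3 : (s+1) - (b+1) = c + 1 := by omega
              rw [h3] at h2
              exact_mod_cast congrArg Nat.cast h2
            simp only [Nat.add_sub_cancel]
            push_cast at key1 key2 ⊢
            linear_combination (x^b*(1-x)^(c+1)) * key1 + (x^(b+1)*(1-x)^c) * key2
      · have hz : (fun y => bern (s+1) j y) = fun _ => (0:ℝ) := by
          funext y; exact bern_of_gt (by push_cast; omega) y
        rw [hz, bern_of_gt (by push_cast; omega), bern_of_gt (by push_cast; omega)]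
        simpa using hasDerivAt_const x (0:ℝ)
    · have hz : (fun y => bern (s+1) j y) = fun _ => (0:ℝ) := by
        funext y; exact bern_of_neg (by omega) y
      rw [hz, bern_of_neg (by omega), bern_of_neg (by omega)]
      simpa using hasDerivAt_const x (0:ℝ)

lemma bern_nonneg {n : ℕ} {j : ℤ} {x : ℝ} (hx : x ∈ Icc (0:ℝ) 1) : 0 ≤ bern n j x := by
  unfold bern
  split
  · have h1 := hx.1; have h2 := hx.2
    have : (0:ℝ) ≤ 1 - x := by linarith
    positivity
  · exact le_refl _

lemma bern_le_one {n : ℕ} {j : ℤ} {x : ℝ} (hx : x ∈ Icc (0:ℝ) 1) : bern n j x ≤ 1 := by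
  unfold bern
  split
  · rename_i hj
    have h1 := hx.1; have h2 := hx.2
    have hx' : (0:ℝ) ≤ 1 - x := by linarith
    set a := j.toNat with ha
    have han : a ≤ n := by omega
    have key : ∑ k ∈ range (n+1), x ^ k * (1-x) ^ (n-k) * (n.choose k : ℝ) = 1 := by
      rw [← add_pow]; simp
    calc (n.choose a : ℝ) * x ^ a * (1 - x) ^ (n - a)
        = x ^ a * (1-x) ^ (n-a) * (n.choose a : ℝ) := by ring
      _ ≤ ∑ k ∈ range (n+1), x ^ k * (1-x) ^ (n-k) * (n.choose k : ℝ) := by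
          apply Finset.single_le_sum (f := fun k => x ^ k * (1-x) ^ (n-k) * (n.choose k : ℝ))
          · intro k _; positivity
          · simpa using Nat.lt_succ_of_le han
      _ = 1 := key
  · exact zero_le_one

/-- Iterated derivatives of Bernstein basis functions, defined recursively. -/
noncomputable def DD : ℕ → ℕ → ℤ → ℝ → ℝ
  | 0, n, j, x => bern n j x
  | (i+1), n, j, x => (n : ℝ) * (DD i (n-1) (j-1) x - DD i (n-1) j x)

lemma DD_hasDerivAt (i : ℕ) : ∀ (n : ℕ) (j : ℤ) (x : ℝ),
    HasDerivAt (fun y => DD i n j y) (DD (i+1) n j x) x := by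
  induction i with
  | zero => intro n j x; exact bern_hasDerivAt n j x
  | succ i ih =>
    intro n j x
    exact (((ih (n-1) (j-1) x).sub (ih (n-1) j x)).const_mul (n:ℝ))

lemma DD_bound (i : ℕ) : ∀ (n : ℕ) (j : ℤ) {x : ℝ}, x ∈ Icc (0:ℝ) 1 →
    |DD i n j x| ≤ (2 * n : ℝ) ^ i := by
  induction i with
  | zero =>
    intro n j x hx
    simp only [DD, pow_zero]
    rw [abs_le]
    exact ⟨by linarith [bern_nonneg (n := n) (j := j) hx], bern_le_one hx⟩
  | succ i ih =>
    intro n j x hx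
    have h1 := ih (n-1) (j-1) hx
    have h2 := ih (n-1) j hx
    have hle : ((2:ℝ) * (n-1 : ℕ)) ^ i ≤ (2 * n) ^ i := by
      apply pow_le_pow_left₀ (by positivity)
      have : ((n-1 : ℕ) : ℝ) ≤ (n : ℝ) := by exact_mod_cast Nat.sub_le n 1
      linarith
    calc |DD (i+1) n j x| = (n:ℝ) * |DD i (n-1) (j-1) x - DD i (n-1) j x| := by
          simp only [DD, abs_mul, abs_of_nonneg (by positivity : (0:ℝ) ≤ (n:ℝ))]
      _ ≤ (n:ℝ) * ((2 * n) ^ i + (2 * n) ^ i) := by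
          apply mul_le_mul_of_nonneg_left _ (by positivity)
          calc |DD i (n-1) (j-1) x - DD i (n-1) j x|
              ≤ |DD i (n-1) (j-1) x| + |DD i (n-1) j x| := abs_sub _ _
            _ ≤ (2 * n) ^ i + (2 * n) ^ i := by
                exact add_le_add (h1.trans hle) (h2.trans hle)
      _ = (2 * n) ^ (i+1) / 2 * 2 := by ring
      _ ≤ (2 * n : ℝ) ^ (i+1) := by nlinarith [pow_nonneg (by positivity : (0:ℝ) ≤ 2*(n:ℝ)) (i+1)]

lemma Bge_hasDerivAt (n k : ℕ) (hk : 1 ≤ k) (x : ℝ) :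
    HasDerivAt (Bge n k) ((n:ℝ) * bern (n-1) ((k:ℤ)-1) x) x := by
  rcases Nat.eq_zero_or_pos n with hn | hn
  · subst hn
    have h0 : Bge 0 k = fun _ => (0:ℝ) := by
      funext y; unfold Bge; rw [Finset.Icc_eq_empty (by omega), Finset.sum_empty]
    rw [h0]
    simpa using hasDerivAt_const x (0:ℝ)
  have hfun : Bge n k = fun y => ∑ j ∈ Finset.Icc k n, bern n (j:ℤ) y := by
    funext y; unfold Bge
    exact Finset.sum_congr rfl fun j hj => (bern_nat n j (Finset.mem_Icc.mp hj).2 y).symm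
  rw [hfun]
  have hd : HasDerivAt (fun y => ∑ j ∈ Finset.Icc k n, bern n (j:ℤ) y)
      (∑ j ∈ Finset.Icc k n, (n:ℝ) * (bern (n-1) ((j:ℤ)-1) x - bern (n-1) (j:ℤ) x)) x :=
    HasDerivAt.fun_sum (fun j _ => bern_hasDerivAt n (j:ℤ) x)
  convert hd using 1
  rw [← Finset.mul_sum]
  congr 1
  by_cases hkn : k ≤ n
  · set g : ℕ → ℝ := fun i => bern (n-1) ((k:ℤ) - 1 + i) x with hg
    have hre : ∑ j ∈ Finset.Icc k n, (bern (n-1) ((j:ℤ)-1) x - bern (n-1) (j:ℤ) x)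
        = ∑ i ∈ Finset.range (n+1-k), (g i - g (i+1)) := by
      rw [← Finset.Ico_add_one_right_eq_Icc, Finset.sum_Ico_eq_sum_range]
      apply Finset.sum_congr rfl
      intro i _
      simp only [hg]
      congr 2 <;> push_cast <;> ring
    rw [hre, Finset.sum_range_sub' g]
    have hg0 : g 0 = bern (n-1) ((k:ℤ)-1) x := by simp [hg]
    have hgend : g (n+1-k) = 0 := by
      apply bern_of_gt; push_cast; omega
    rw [hg0, hgend, sub_zero]
  · rw [Finset.Icc_eq_empty (by omega), Finset.sum_empty]
    apply bern_of_gt; push_cast; omega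

noncomputable def DB (i n k : ℕ) (x : ℝ) : ℝ :=
  if i = 0 then Bge n k x else (n:ℝ) * DD (i-1) (n-1) ((k:ℤ)-1) x

lemma DB_hasDerivAt {k : ℕ} (hk : 1 ≤ k) (i n : ℕ) (x : ℝ) :
    HasDerivAt (fun y => DB i n k y) (DB (i+1) n k x) x := by
  cases i with
  | zero =>
    simp only [DB, if_pos rfl, if_neg (Nat.one_ne_zero), Nat.sub_self]
    exact Bge_hasDerivAt n k hk x
  | succ i =>
    simp only [DB, if_neg (Nat.succ_ne_zero i), if_neg (Nat.succ_ne_zero (i+1)),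
      Nat.add_sub_cancel]
    exact (DD_hasDerivAt i (n-1) ((k:ℤ)-1) x).const_mul (n:ℝ)

lemma Bge_nonneg {n k : ℕ} {x : ℝ} (hx : x ∈ Icc (0:ℝ) 1) : 0 ≤ Bge n k x := by
  unfold Bge
  apply Finset.sum_nonneg
  intro j hj
  have h1 := hx.1; have h2 := hx.2
  have : (0:ℝ) ≤ 1 - x := by linarith
  positivity

lemma Bge_le_one {n k : ℕ} {x : ℝ} (hx : x ∈ Icc (0:ℝ) 1) : Bge n k x ≤ 1 := by
  have h1 := hx.1; have h2 := hx.2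
  have hx' : (0:ℝ) ≤ 1 - x := by linarith
  unfold Bge
  calc ∑ j ∈ Finset.Icc k n, (n.choose j : ℝ) * x ^ j * (1 - x) ^ (n - j)
      ≤ ∑ j ∈ Finset.range (n+1), (n.choose j : ℝ) * x ^ j * (1 - x) ^ (n - j) := by
        apply Finset.sum_le_sum_of_subset_of_nonneg
        · intro j hj
          simp only [Finset.mem_Icc] at hj
          simp [Finset.mem_range, Nat.lt_succ_of_le hj.2]
        · intro j _ _; positivity
    _ = 1 := by
        have hsum : ∑ j ∈ Finset.range (n+1), (n.choose j : ℝ) * x ^ j * (1 - x) ^ (n - j)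
            = (x + (1-x))^n := by
          rw [add_pow]
          exact Finset.sum_congr rfl fun j _ => by ring
        rw [hsum]
        norm_num

lemma DB_bound {m k : ℕ} (hm : 1 ≤ m) (hk : 1 ≤ k) {i : ℕ} (him : i ≤ m) (n : ℕ)
    {x : ℝ} (hx : x ∈ Icc (0:ℝ) 1) :
    |DB i n k x| ≤ 2 ^ m * (n:ℝ) ^ m := by
  rcases Nat.eq_zero_or_pos n with hn | hn
  · subst hn
    have hz : DB i 0 k x = 0 := by
      cases i with
      | zero =>
        unfold DB Bge
        rw [if_pos rfl, Finset.Icc_eq_empty (by omega), Finset.sum_empty]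
      | succ i => simp [DB]
    rw [hz]
    simp only [abs_zero, Nat.cast_zero]
    positivity
  · have hn1 : (1:ℝ) ≤ (n:ℝ) := by exact_mod_cast hn
    cases i with
    | zero =>
      simp only [DB, if_pos rfl]
      have h1 : |Bge n k x| ≤ 1 := by
        rw [abs_le]; exact ⟨by linarith [Bge_nonneg (n := n) (k := k) hx], Bge_le_one hx⟩
      calc |Bge n k x| ≤ 1 := h1
        _ ≤ 2 ^ m * (n:ℝ) ^ m := by
            have h2 : (1:ℝ) ≤ 2 ^ m := one_le_pow₀ (by norm_num)
            have h3 : (1:ℝ) ≤ (n:ℝ) ^ m := one_le_pow₀ hn1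
            nlinarith
    | succ i =>
      simp only [DB, if_neg (Nat.succ_ne_zero i), Nat.add_sub_cancel]
      have hdd := DD_bound i (n-1) ((k:ℤ)-1) hx
      have hle : ((2:ℝ) * ((n-1:ℕ):ℝ)) ^ i ≤ (2 * (n:ℝ)) ^ i := by
        apply pow_le_pow_left₀ (by positivity)
        have : ((n-1 : ℕ) : ℝ) ≤ (n : ℝ) := by exact_mod_cast Nat.sub_le n 1
        linarith
      calc |(n:ℝ) * DD i (n-1) ((k:ℤ)-1) x| = (n:ℝ) * |DD i (n-1) ((k:ℤ)-1) x| := by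
            rw [abs_mul, abs_of_nonneg (by positivity : (0:ℝ) ≤ (n:ℝ))]
        _ ≤ (n:ℝ) * (2 * (n:ℝ)) ^ i := by
            exact mul_le_mul_of_nonneg_left (hdd.trans hle) (by positivity)
        _ = 2 ^ i * (n:ℝ) ^ (i+1) := by ring
        _ ≤ 2 ^ m * (n:ℝ) ^ m := by
            have h2 : (2:ℝ) ^ i ≤ 2 ^ m := pow_le_pow_right₀ (by norm_num) (by omega)
            have h3 : (n:ℝ) ^ (i+1) ≤ (n:ℝ) ^ m := pow_le_pow_right₀ hn1 (by omega)
            have h4 : (0:ℝ) ≤ (n:ℝ) ^ (i+1) := by positivity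
            exact mul_le_mul h2 h3 h4 (by positivity)


lemma hasDerivWithinAt_tsum {s : Set ℝ} (hs : Convex ℝ s)
    (f f' : ℕ → ℝ → ℝ) (u : ℕ → ℝ) (hu : Summable u)
    (hf : ∀ n, ∀ y ∈ s, HasDerivWithinAt (f n) (f' n y) s y)
    (hb : ∀ n, ∀ y ∈ s, |f' n y| ≤ u n)
    (hsum : ∀ y ∈ s, Summable (fun n => f n y))
    {x : ℝ} (hx : x ∈ s) :
    HasDerivWithinAt (fun y => ∑' n, f n y) (∑' n, f' n x) s x := by
  have hu0 : ∀ n, 0 ≤ u n := fun n => (abs_nonneg _).trans (hb n x hx)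
  have hf'sum : ∀ y ∈ s, Summable (fun n => f' n y) := fun y hy =>
    Summable.of_norm_bounded hu (fun n => by simpa [Real.norm_eq_abs] using hb n y hy)
  have lip : ∀ n, ∀ y ∈ s, |f n y - f n x| ≤ u n * |y - x| := by
    intro n y hy
    have := hs.norm_image_sub_le_of_norm_hasDerivWithin_le
      (f := f n) (f' := fun z => f' n z) (fun z hz => hf n z hz)
      (fun z hz => by simpa [Real.norm_eq_abs] using hb n z hz) hx hy
    simpa [Real.norm_eq_abs] using this
  rw [hasDerivWithinAt_iff_tendsto_slope]
  rw [Metric.tendsto_nhds]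
  intro ε hε
  -- choose N with tail sum small
  have htail : Tendsto (fun N => ∑' n, u (n + N)) atTop (𝓝 0) := tendsto_sum_nat_add u
  have hε4 : 0 < ε / 4 := by linarith
  obtain ⟨N, hN⟩ := (htail.eventually (eventually_lt_nhds hε4)).exists
  have hutail : Summable fun n => u (n + N) := (summable_nat_add_iff N).mpr hu
  have htail_nonneg : 0 ≤ ∑' n, u (n + N) := tsum_nonneg fun n => hu0 _
  -- partial sum has the right derivative
  have hS : HasDerivWithinAt (fun y => ∑ n ∈ range N, f n y)
      (∑ n ∈ range N, f' n x) s x := HasDerivWithinAt.fun_sum fun n _ => hf n x hx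
  have hSslope := hasDerivWithinAt_iff_tendsto_slope.mp hS
  have hev1 : ∀ᶠ y in 𝓝[s \ {x}] x,
      dist (slope (fun y => ∑ n ∈ range N, f n y) x y) (∑ n ∈ range N, f' n x) < ε / 4 :=
    hSslope (Metric.ball_mem_nhds _ hε4)
  have hev2 : ∀ᶠ y in 𝓝[s \ {x}] x, y ∈ s \ {x} := self_mem_nhdsWithin
  filter_upwards [hev1, hev2] with y hSy hy
  have hys : y ∈ s := hy.1
  have hyx : y ≠ x := hy.2
  have hd : y - x ≠ 0 := sub_ne_zero.mpr hyx
  -- tail functions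
  have hsplit : ∀ z ∈ s, (∑' n, f n z) = (∑ n ∈ range N, f n z) + ∑' n, f (n + N) z :=
    fun z hz => (Summable.sum_add_tsum_nat_add N (hsum z hz)).symm
  -- tail slope bound
  have htb : |(∑' n, f (n + N) y) - ∑' n, f (n + N) x| ≤ (∑' n, u (n + N)) * |y - x| := by
    have hsy : Summable fun n => f (n + N) y := (summable_nat_add_iff N).mpr (hsum y hys)
    have hsx : Summable fun n => f (n + N) x := (summable_nat_add_iff N).mpr (hsum x hx)
    have hdiff : Summable fun n => f (n + N) y - f (n + N) x := hsy.sub hsx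
    calc |(∑' n, f (n + N) y) - ∑' n, f (n + N) x|
        = |∑' n, (f (n + N) y - f (n + N) x)| := by rw [Summable.tsum_sub hsy hsx]
      _ ≤ ∑' n, |f (n + N) y - f (n + N) x| := by
          simpa [Real.norm_eq_abs] using
            norm_tsum_le_tsum_norm (f := fun n => f (n + N) y - f (n + N) x)
              (by simpa [Real.norm_eq_abs] using hdiff.abs)
      _ ≤ ∑' n, u (n + N) * |y - x| := by
          apply Summable.tsum_le_tsum _ hdiff.abs (hutail.mul_right _)
          exact fun n => lip (n + N) y hys
      _ = (∑' n, u (n + N)) * |y - x| := tsum_mul_right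
  -- main estimate
  set T := ∑' n, u (n + N) with hT
  have hslope_split : slope (fun z => ∑' n, f n z) x y
      = slope (fun z => ∑ n ∈ Finset.range N, f n z) x y
        + ((∑' n, f (n + N) y) - (∑' n, f (n + N) x)) / (y - x) := by
    simp only [slope_def_field]
    rw [hsplit y hys, hsplit x hx]
    ring
  have hA : |(∑' n, f' n x) - ∑ n ∈ Finset.range N, f' n x| ≤ T := by
    have he : (∑' n, f' n x) - (∑ n ∈ Finset.range N, f' n x) = ∑' n, f' (n + N) x := by
      rw [← Summable.sum_add_tsum_nat_add N (hf'sum x hx)]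
      ring
    rw [he]
    have hsab : Summable fun n => |f' (n + N) x| :=
      hutail.of_nonneg_of_le (fun n => abs_nonneg _) (fun n => hb (n + N) x hx)
    calc |∑' n, f' (n + N) x| ≤ ∑' n, |f' (n + N) x| := by
          simpa [Real.norm_eq_abs] using
            norm_tsum_le_tsum_norm (f := fun n => f' (n + N) x)
              (by simpa [Real.norm_eq_abs] using hsab)
      _ ≤ T := Summable.tsum_le_tsum (fun n => hb (n + N) x hx) hsab hutail
  have htslope : |((∑' n, f (n + N) y) - (∑' n, f (n + N) x)) / (y - x)| ≤ T := by
    rw [abs_div]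
    rw [div_le_iff₀ (abs_pos.mpr hd)]
    exact htb
  rw [Real.dist_eq]
  have expand : slope (fun z => ∑' n, f n z) x y - (∑' n, f' n x)
      = (slope (fun z => ∑ n ∈ Finset.range N, f n z) x y - ∑ n ∈ Finset.range N, f' n x)
        + ((∑' n, f (n + N) y) - (∑' n, f (n + N) x)) / (y - x)
        - ((∑' n, f' n x) - ∑ n ∈ Finset.range N, f' n x) := by
    rw [hslope_split]; ring
  rw [expand]
  have h1 : |slope (fun z => ∑ n ∈ Finset.range N, f n z) x y
      - ∑ n ∈ Finset.range N, f' n x| < ε / 4 := by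
    rw [← Real.dist_eq]; exact hSy
  calc |_| ≤ |slope (fun z => ∑ n ∈ Finset.range N, f n z) x y - ∑ n ∈ Finset.range N, f' n x|
        + |((∑' n, f (n + N) y) - (∑' n, f (n + N) x)) / (y - x)|
        + |(∑' n, f' n x) - ∑ n ∈ Finset.range N, f' n x| := abs_sub (  _ + _) _ |>.trans
          (by gcongr; exact abs_add_le _ _)
    _ < ε / 4 + T + T := by
        have := htslope; have := hA
        linarith
    _ < ε := by linarith

lemma psi_eq {m : ℕ} (hm : 1 ≤ m) (h : ℕ → ℕ) (hh : ∀ n, 1 ≤ h n)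
    (χ : ℕ → ℝ) (hpos : ∀ n, 0 ≤ χ n)
    (hmom : Summable fun n => χ n * (n : ℝ) ^ m) :
    ∀ i, i ≤ m → ∀ x ∈ Icc (0:ℝ) 1,
      iteratedDerivWithin i (Psi χ h) (Icc (0:ℝ) 1) x = ∑' n, χ n * DB i n (h n) x := by
  set u : ℕ → ℝ := fun n => 2 ^ m * (χ n * (n:ℝ) ^ m) with hu_def
  have hu : Summable u := hmom.mul_left _
  have hb : ∀ i, i ≤ m → ∀ (n : ℕ), ∀ y ∈ Icc (0:ℝ) 1, |χ n * DB i n (h n) y| ≤ u n := by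
    intro i him n y hy
    calc |χ n * DB i n (h n) y| = χ n * |DB i n (h n) y| := by
          rw [abs_mul, abs_of_nonneg (hpos n)]
      _ ≤ χ n * (2 ^ m * (n:ℝ) ^ m) :=
          mul_le_mul_of_nonneg_left (DB_bound hm (hh n) him n hy) (hpos n)
      _ = u n := by rw [hu_def]; ring
  have hsumm : ∀ i, i ≤ m → ∀ y ∈ Icc (0:ℝ) 1, Summable fun n => χ n * DB i n (h n) y := by
    intro i him y hy
    exact Summable.of_norm_bounded hu fun n => by
      rw [Real.norm_eq_abs]; exact hb i him n y hy
  intro i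
  induction i with
  | zero =>
    intro _ x hx
    simp only [iteratedDerivWithin_zero, Psi]
    apply tsum_congr
    intro n
    simp [DB]
  | succ i ih =>
    intro hi x hx
    have hi' : i ≤ m := by omega
    rw [iteratedDerivWithin_succ]
    rw [derivWithin_congr (fun y hy => ih hi' y hy) (ih hi' x hx)]
    have hder : HasDerivWithinAt (fun y => ∑' n, χ n * DB i n (h n) y)
        (∑' n, χ n * DB (i+1) n (h n) x) (Icc (0:ℝ) 1) x := by
      apply hasDerivWithinAt_tsum (convex_Icc 0 1)
        (fun n y => χ n * DB i n (h n) y) (fun n y => χ n * DB (i+1) n (h n) y) u hu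
      · intro n y hy
        exact ((DB_hasDerivAt (hh n) i n y).const_mul (χ n)).hasDerivWithinAt
      · exact fun n y hy => hb (i+1) hi n y hy
      · exact fun y hy => hsumm i hi' y hy
      · exact hx
    exact hder.derivWithin (uniqueDiffOn_Icc_zero_one x hx)

theorem stmt7 (m : ℕ) (hm : 1 ≤ m) (h : ℕ → ℕ) (hh : ∀ n, 1 ≤ h n)
    (χ : ℕ → ℝ) (χs : ℕ → ℕ → ℝ)
    (hχ : IsChildDist χ) (hχs : ∀ j, IsChildDist (χs j))
    (hmom : Summable fun n => χ n * (n : ℝ) ^ m)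
    (hmoms : ∀ j, Summable fun n => χs j n * (n : ℝ) ^ m)
    (hconv : Filter.Tendsto
      (fun j => ∑' k : ℕ, ((k : ℝ) + 1) ^ m * |χs j (k + 1) - χ (k + 1)|)
      Filter.atTop (nhds 0)) :
    Filter.Tendsto
      (fun j => iteratedDerivWithin m (Psi (χs j) h) (Set.Icc (0 : ℝ) 1) 0)
      Filter.atTop
      (nhds (iteratedDerivWithin m (Psi χ h) (Set.Icc (0 : ℝ) 1) 0)) := by
  have h0 : (0:ℝ) ∈ Icc (0:ℝ) 1 := ⟨le_refl 0, zero_le_one⟩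
  set c : ℕ → ℝ := fun n => DB m n (h n) 0 with hc_def
  have hc : ∀ n, |c n| ≤ 2 ^ m * (n:ℝ) ^ m := fun n => DB_bound hm (hh n) le_rfl n h0
  have hkey : iteratedDerivWithin m (Psi χ h) (Icc (0:ℝ) 1) 0 = ∑' n, χ n * c n :=
    psi_eq hm h hh χ hχ.1 hmom m le_rfl 0 h0
  have hkeys : ∀ j, iteratedDerivWithin m (Psi (χs j) h) (Icc (0:ℝ) 1) 0 = ∑' n, χs j n * c n :=
    fun j => psi_eq hm h hh (χs j) (hχs j).1 (hmoms j) m le_rfl 0 h0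
  -- summability of the series of values
  have hSc : Summable fun n => χ n * c n := by
    apply Summable.of_norm_bounded (g := fun n => 2 ^ m * (χ n * (n:ℝ)^m)) (hmom.mul_left _)
    intro n
    rw [Real.norm_eq_abs, abs_mul, abs_of_nonneg (hχ.1 n)]
    calc χ n * |c n| ≤ χ n * (2^m * (n:ℝ)^m) := mul_le_mul_of_nonneg_left (hc n) (hχ.1 n)
      _ = 2^m * (χ n * (n:ℝ)^m) := by ring
  have hScs : ∀ j, Summable fun n => χs j n * c n := by
    intro j
    apply Summable.of_norm_bounded (g := fun n => 2 ^ m * (χs j n * (n:ℝ)^m)) ((hmoms j).mul_left _)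
    intro n
    rw [Real.norm_eq_abs, abs_mul, abs_of_nonneg ((hχs j).1 n)]
    calc χs j n * |c n| ≤ χs j n * (2^m * (n:ℝ)^m) :=
          mul_le_mul_of_nonneg_left (hc n) ((hχs j).1 n)
      _ = 2^m * (χs j n * (n:ℝ)^m) := by ring
  -- the weighted difference series
  have hSd : ∀ j, Summable fun n : ℕ => (n:ℝ)^m * |χs j n - χ n| := by
    intro j
    refine Summable.of_nonneg_of_le (fun n => by positivity) (fun n => ?_)
      ((hmoms j).add hmom)
    have habs : |χs j n - χ n| ≤ χs j n + χ n := by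
      have := (hχs j).1 n; have := hχ.1 n
      rw [abs_le]; constructor <;> linarith [abs_nonneg (χs j n - χ n)]
    have hpow : (0:ℝ) ≤ (n:ℝ)^m := by positivity
    nlinarith
  -- bound the difference of the limits
  have hdiff : ∀ j, |(∑' n, χs j n * c n) - ∑' n, χ n * c n|
      ≤ 2 ^ m * ∑' n : ℕ, (n:ℝ)^m * |χs j n - χ n| := by
    intro j
    rw [← Summable.tsum_sub (hScs j) hSc]
    have hsub : Summable fun n => χs j n * c n - χ n * c n := (hScs j).sub hSc
    have habs2 : Summable fun n => |χs j n * c n - χ n * c n| := hsub.abs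
    calc |∑' n, (χs j n * c n - χ n * c n)|
        ≤ ∑' n, |χs j n * c n - χ n * c n| := by
          simpa [Real.norm_eq_abs] using
            norm_tsum_le_tsum_norm (f := fun n => χs j n * c n - χ n * c n)
              (by simpa [Real.norm_eq_abs] using habs2)
      _ ≤ ∑' n : ℕ, 2 ^ m * ((n:ℝ)^m * |χs j n - χ n|) := by
          apply Summable.tsum_le_tsum _ habs2 ((hSd j).mul_left _)
          intro n
          have : χs j n * c n - χ n * c n = (χs j n - χ n) * c n := by ring
          rw [this, abs_mul]
          calc |χs j n - χ n| * |c n| ≤ |χs j n - χ n| * (2^m * (n:ℝ)^m) :=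
                mul_le_mul_of_nonneg_left (hc n) (abs_nonneg _)
            _ = 2 ^ m * ((n:ℝ)^m * |χs j n - χ n|) := by ring
      _ = 2 ^ m * ∑' n : ℕ, (n:ℝ)^m * |χs j n - χ n| := by rw [tsum_mul_left]
  -- identify the convergence hypothesis with the full weighted sum
  have hid : ∀ j, (∑' n : ℕ, (n:ℝ)^m * |χs j n - χ n|)
      = ∑' k : ℕ, ((k : ℝ) + 1) ^ m * |χs j (k + 1) - χ (k + 1)| := by
    intro j
    rw [Summable.tsum_eq_zero_add (hSd j)]
    have hz : ((0:ℕ):ℝ)^m * |χs j 0 - χ 0| = 0 := by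
      rw [Nat.cast_zero, zero_pow (by omega), zero_mul]
    rw [hz, zero_add]
    apply tsum_congr
    intro k
    push_cast
    ring_nf
  -- conclude by squeezing
  rw [tendsto_iff_dist_tendsto_zero]
  apply squeeze_zero (fun j => dist_nonneg)
    (g := fun j => 2 ^ m * ∑' k : ℕ, ((k : ℝ) + 1) ^ m * |χs j (k + 1) - χ (k + 1)|)
  · intro j
    rw [hkey, hkeys j, Real.dist_eq]
    calc |(∑' n, χs j n * c n) - ∑' n, χ n * c n|
        ≤ 2 ^ m * ∑' n : ℕ, (n:ℝ)^m * |χs j n - χ n| := hdiff j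
      _ = 2 ^ m * ∑' k : ℕ, ((k : ℝ) + 1) ^ m * |χs j (k + 1) - χ (k + 1)| := by rw [hid j]
  · simpa using hconv.const_mul ((2:ℝ) ^ m)
end

section
/- Let χ be the child distribution with χ(0) = χ(1) = 0 and χ(ℓ) = 1/(ℓ(ℓ−1)) for ℓ ≥ 2, and let h(ℓ) = 2 for all ℓ. Then the automaton distribution map of (χ,h) is the identity on [0,1]: for every x ∈ [0,1], Σ_{ℓ=2}^{∞} (1/(ℓ(ℓ−1))) · P[Bin(ℓ,x) ≥ 2] = x. -/
lemma Bge_two (n : ℕ) (hn : 2 ≤ n) (x : ℝ) :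
    Bge n 2 x = 1 - (1 - x) ^ n - n * x * (1 - x) ^ (n - 1) := by
  have hb : (x + (1 - x)) ^ n
      = ∑ j ∈ Finset.range (n + 1), x ^ j * (1 - x) ^ (n - j) * (n.choose j : ℝ) :=
    add_pow x (1 - x) n
  have htot : ∑ j ∈ Finset.range (n + 1), (n.choose j : ℝ) * x ^ j * (1 - x) ^ (n - j) = 1 := by
    have h1 : (x + (1 - x)) ^ n = 1 := by norm_num
    calc ∑ j ∈ Finset.range (n + 1), (n.choose j : ℝ) * x ^ j * (1 - x) ^ (n - j)
        = ∑ j ∈ Finset.range (n + 1), x ^ j * (1 - x) ^ (n - j) * (n.choose j : ℝ) :=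
          Finset.sum_congr rfl fun j _ => by ring
      _ = (x + (1 - x)) ^ n := (add_pow x (1 - x) n).symm
      _ = 1 := h1
  have hsplit : ∑ j ∈ Finset.range (n + 1), (n.choose j : ℝ) * x ^ j * (1 - x) ^ (n - j)
      = (∑ j ∈ Finset.Ico 0 2, (n.choose j : ℝ) * x ^ j * (1 - x) ^ (n - j))
        + ∑ j ∈ Finset.Ico 2 (n + 1), (n.choose j : ℝ) * x ^ j * (1 - x) ^ (n - j) := by
    rw [Finset.range_eq_Ico, ← Finset.sum_Ico_consecutive _ (Nat.zero_le 2) (by omega)]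
  have hIcc : Finset.Icc 2 n = Finset.Ico 2 (n + 1) := by
    ext j; simp [Nat.lt_succ_iff]
  have hsmall : (∑ j ∈ Finset.Ico 0 2, (n.choose j : ℝ) * x ^ j * (1 - x) ^ (n - j))
      = (1 - x) ^ n + n * x * (1 - x) ^ (n - 1) := by
    have : Finset.Ico 0 2 = {0, 1} := by decide
    rw [this]
    simp [Nat.choose_one_right]
    try ring
  have : Bge n 2 x = 1 - ((1 - x) ^ n + n * x * (1 - x) ^ (n - 1)) := by
    rw [Bge, hIcc]
    rw [hsplit, hsmall] at htot
    linarith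
  linarith [this]

lemma key (m : ℕ) (x : ℝ) :
    (1 / (((m + 2 : ℕ) : ℝ) * (((m + 2 : ℕ) : ℝ) - 1))) * Bge (m + 2) 2 x
      = (1 - (1 - x) ^ (m + 1)) / (m + 1) - (1 - (1 - x) ^ (m + 2)) / (m + 2) := by
  rw [Bge_two (m + 2) (by omega) x]
  have h1 : ((m : ℝ) + 1) ≠ 0 := by positivity
  have h2 : ((m : ℝ) + 2) ≠ 0 := by positivity
  push_cast
  rw [show ((m : ℝ) + 2 - 1) = (m : ℝ) + 1 from by ring]
  field_simp
  ring

theorem stmt8 (x : ℝ) (hx : x ∈ Set.Icc (0 : ℝ) 1) :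
    ∑' n : ℕ, (if 2 ≤ n then 1 / ((n : ℝ) * ((n : ℝ) - 1)) else 0) * Bge n 2 x = x := by
  obtain ⟨hx0, hx1⟩ := hx
  set f : ℕ → ℝ := fun n => (if 2 ≤ n then 1 / ((n : ℝ) * ((n : ℝ) - 1)) else 0) * Bge n 2 x
    with hf
  have hq0 : (0 : ℝ) ≤ 1 - x := by linarith
  have hq1 : 1 - x ≤ 1 := by linarith
  have hnonneg : ∀ n, 0 ≤ f n := by
    intro n
    apply mul_nonneg
    · split
      · have h2 : (2 : ℝ) ≤ (n : ℝ) := by exact_mod_cast ‹2 ≤ n›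
        have hpos : (0 : ℝ) < (n : ℝ) * ((n : ℝ) - 1) := by nlinarith
        exact div_nonneg zero_le_one hpos.le
      · exact le_refl 0
    · unfold Bge
      exact Finset.sum_nonneg fun j _ => by positivity
  -- partial sums
  have hpartial : ∀ m : ℕ, ∑ n ∈ Finset.range (m + 2), f n
      = x - (1 - (1 - x) ^ (m + 1)) / (m + 1) := by
    intro m
    induction m with
    | zero =>
      rw [Finset.sum_range_succ, Finset.sum_range_one]
      norm_num [hf]
    | succ k ih =>
      rw [Finset.sum_range_succ, ih]
      have h2k : 2 ≤ k + 2 := by omega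
      have : f (k + 2) = (1 - (1 - x) ^ (k + 1)) / (k + 1) - (1 - (1 - x) ^ (k + 2)) / (k + 2) := by
        rw [hf]
        simp only [h2k, if_pos]
        exact key k x
      rw [this]
      push_cast
      ring
  have htend : Filter.Tendsto (fun m : ℕ => x - (1 - (1 - x) ^ (m + 1)) / (m + 1))
      Filter.atTop (nhds x) := by
    have hz : Filter.Tendsto (fun m : ℕ => (1 - (1 - x) ^ (m + 1)) / (m + 1))
        Filter.atTop (nhds 0) := by
      apply squeeze_zero
      · intro m
        apply div_nonneg
        · have := pow_le_one₀ hq0 hq1 (n := m + 1)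
          linarith
        · positivity
      · intro m
        have h1 : (1 - (1 - x) ^ (m + 1)) ≤ 1 := by
          have := pow_nonneg hq0 (m + 1); linarith
        calc (1 - (1 - x) ^ (m + 1)) / (m + 1) ≤ 1 / (m + 1) := by
              apply div_le_div_of_nonneg_right h1 (by positivity) |>.trans_eq rfl
          _ = 1 / (m + 1) := rfl
      · exact tendsto_one_div_add_atTop_nhds_zero_nat
    have := Filter.Tendsto.sub (tendsto_const_nhds (x := x)) hz
    simpa using this
  have hsumtend : Filter.Tendsto (fun N : ℕ => ∑ n ∈ Finset.range N, f n)
      Filter.atTop (nhds x) := by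
    rw [← Filter.tendsto_add_atTop_iff_nat 2]
    simpa only [hpartial] using htend
  have : HasSum f x := (hasSum_iff_tendsto_nat_of_nonneg hnonneg x).2 hsumtend
  exact this.tsum_eq
end

section
/- Let 2 ≤ ℓ_1 < ℓ_2 < ⋯ < ℓ_m be integers, let h be a threshold function with h(ℓ_k) = k for each k, and let χ = crit(ℓ_1,…,ℓ_m) be the unique child distribution supported within {0, ℓ_1, …, ℓ_m} for which (χ,h) is m-concordant, with automaton distribution map Ψ. Then χ places strictly positive mass on each of 0, ℓ_1, …, ℓ_m, and there exist nonnegative reals c_{m+1}, …, c_{ℓ_m} with Σ_{r=m+1}^{ℓ_m} c_r = 1 such that for all x ∈ [0,1], x − Ψ(x) = χ(0) · Σ_{r=m+1}^{ℓ_m} c_r · B≥_{ℓ_m, r}(x); that is, (x − Ψ(x))/χ(0) is a convex combination of the polynomials B≥_{ℓ_m, r} for r ∈ {m+1, …, ℓ_m}. -/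
/-- `Ψ` is `m`-concordant: the first `m` derivatives of `Ψ` at `0` (within `[0,1]`)
match those of the identity, i.e. `Ψ'(0) = 1` and `Ψ^{(k)}(0) = 0` for `2 ≤ k ≤ m`.
(For `m = 0` the condition is vacuous.) -/
def Concordant (m : ℕ) (Ψ : ℝ → ℝ) : Prop :=
  (1 ≤ m → iteratedDerivWithin 1 Ψ (Set.Icc (0 : ℝ) 1) 0 = 1) ∧
  ∀ k, 2 ≤ k → k ≤ m → iteratedDerivWithin k Ψ (Set.Icc (0 : ℝ) 1) 0 = 0

open Polynomial Finset

noncomputable def BgePoly (n k : ℕ) : ℝ[X] :=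
  ∑ j ∈ Finset.Icc k n, C (n.choose j : ℝ) * (X ^ j * (1 - X) ^ (n - j))

lemma BgePoly_eval (n k : ℕ) (x : ℝ) : (BgePoly n k).eval x = Bge n k x := by
  simp [BgePoly, Bge, eval_finset_sum, mul_assoc]

lemma BgePoly_eval_one (n k : ℕ) (h2 : k ≤ n) : (BgePoly n k).eval 1 = 1 := by
  rw [BgePoly, eval_finset_sum, Finset.sum_eq_single n]
  · simp
  · intro j hj hjn
    simp only [Finset.mem_Icc] at hj
    have : n - j ≠ 0 := by omega
    simp [this]
  · intro hn
    simp only [Finset.mem_Icc] at hn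
    omega

lemma BgePoly_coeff_zero (n k : ℕ) (h1 : 1 ≤ k) : (BgePoly n k).coeff 0 = 0 := by
  rw [coeff_zero_eq_eval_zero, BgePoly, eval_finset_sum]
  apply Finset.sum_eq_zero
  intro j hj
  simp only [Finset.mem_Icc] at hj
  have : j ≠ 0 := by omega
  simp [this]

lemma coeff_XI_self (s e : ℕ) : ((X : ℝ[X]) ^ s * (1 - X) ^ e).coeff s = 1 := by
  rw [coeff_X_pow_mul']
  simp [coeff_zero_eq_eval_zero]

lemma coeff_XI_lt (s e k : ℕ) (h : k < s) : ((X : ℝ[X]) ^ s * (1 - X) ^ e).coeff k = 0 := by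
  rw [coeff_X_pow_mul']
  simp [Nat.not_le.mpr h]

lemma one_eq_sum_XI (t : ℕ) :
    (1 : ℝ[X]) = ∑ i ∈ Finset.range (t + 1), C (t.choose i : ℝ) * (X ^ i * (1 - X) ^ (t - i)) := by
  have h : ((X : ℝ[X]) + (1 - X)) ^ t = 1 := by ring_nf
  calc (1 : ℝ[X]) = ((X : ℝ[X]) + (1 - X)) ^ t := h.symm
    _ = _ := by
        rw [add_pow]
        apply Finset.sum_congr rfl
        intro i _
        rw [C_eq_natCast]
        ring

lemma BgePoly_split (N r : ℕ) (h : r ≤ N) :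
    BgePoly N r = C (N.choose r : ℝ) * (X ^ r * (1 - X) ^ (N - r)) + BgePoly N (r + 1) := by
  rw [BgePoly, BgePoly,
    show Finset.Icc r N = insert r (Finset.Icc (r + 1) N) by ext j; simp [Finset.mem_Icc]; omega,
    Finset.sum_insert (by simp)]

lemma BgePoly_derivative' (N : ℕ) : ∀ t r, r + t = N → 1 ≤ r →
    derivative (BgePoly N r) = C ((r * N.choose r : ℕ) : ℝ) * (X ^ (r - 1) * (1 - X) ^ (N - r)) := by
  intro t
  induction t with
  | zero =>
    intro r hr h1
    have hrN : r = N := by omega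
    subst hrN
    rw [BgePoly, show Finset.Icc r r = {r} from by simp, Finset.sum_singleton]
    simp only [Nat.sub_self, pow_zero, mul_one, Nat.choose_self, Nat.cast_one, map_one, one_mul]
    rw [derivative_X_pow]
  | succ t ih =>
    intro r hr h1
    rw [BgePoly_split N r (by omega), derivative_add, ih (r + 1) (by omega) (by omega)]
    rw [derivative_mul, derivative_C, zero_mul, zero_add, derivative_mul, derivative_X_pow,
      derivative_pow, derivative_sub, derivative_one, derivative_X, zero_sub]
    have keyN : (r + 1) * N.choose (r + 1) = N.choose r * (N - r) := by
      rw [mul_comm]; exact Nat.choose_succ_right_eq N r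
    rw [keyN, Nat.cast_mul, C_mul]
    have h3 : N - (r + 1) = N - r - 1 := by omega
    rw [h3]
    have h4 : ((r * N.choose r : ℕ) : ℝ) = (r : ℝ) * (N.choose r : ℝ) := by push_cast; ring
    rw [h4]
    have h5 : (1 - X : ℝ[X]) ^ (N - r) = (1 - X) ^ (N - r - 1) * (1 - X) := by
      rw [← pow_succ]
      congr 1
      omega
    rw [C_mul, h5]
    simp only [Nat.add_sub_cancel]
    ring

lemma BgePoly_derivative (N r : ℕ) (h1 : 1 ≤ r) (h2 : r ≤ N) :
    derivative (BgePoly N r) = C ((r * N.choose r : ℕ) : ℝ) * (X ^ (r - 1) * (1 - X) ^ (N - r)) :=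
  BgePoly_derivative' N (N - r) r (by omega) h1

lemma poly_iteratedDerivWithin (p : ℝ[X]) (n : ℕ) :
    ∀ x ∈ Set.Icc (0:ℝ) 1, iteratedDerivWithin n (fun y => p.eval y) (Set.Icc (0:ℝ) 1) x
      = (derivative^[n] p).eval x := by
  induction n with
  | zero => intro x hx; simp [iteratedDerivWithin_zero]
  | succ n ih =>
    intro x hx
    rw [iteratedDerivWithin_succ]
    rw [derivWithin_congr (fun y hy => ih y hy) (ih x hx)]
    rw [Polynomial.derivWithin ((derivative)^[n] p) (uniqueDiffOn_Icc_zero_one x hx)]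
    rw [Function.iterate_succ_apply']

lemma poly_iDW_coeff (p : ℝ[X]) (n : ℕ) :
    iteratedDerivWithin n (fun y => p.eval y) (Set.Icc (0:ℝ) 1) 0
      = (Nat.factorial n : ℝ) * p.coeff n := by
  rw [poly_iteratedDerivWithin p n 0 (by norm_num)]
  rw [← Polynomial.coeff_zero_eq_eval_zero, Polynomial.coeff_iterate_derivative]
  simp [Nat.descFactorial_self, mul_comm]

theorem stmt11 (m : ℕ) (hm : 1 ≤ m) (ℓ : ℕ → ℕ) (h : ℕ → ℕ)
    (hℓ1 : 2 ≤ ℓ 1)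
    (hinc : ∀ k, 1 ≤ k → k < m → ℓ k < ℓ (k + 1))
    (hh : ∀ n, 1 ≤ h n)
    (hhℓ : ∀ k, 1 ≤ k → k ≤ m → h (ℓ k) = k)
    (χ : ℕ → ℝ) (hχ : IsChildDist χ)
    (hsupp : ∀ n, χ n ≠ 0 → n = 0 ∨ ∃ k, 1 ≤ k ∧ k ≤ m ∧ ℓ k = n)
    (hconc : Concordant m (Psi χ h)) :
    0 < χ 0 ∧ (∀ k, 1 ≤ k → k ≤ m → 0 < χ (ℓ k)) ∧
    ∃ c : ℕ → ℝ, (∀ r, 0 ≤ c r) ∧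
      (∑ r ∈ Finset.Icc (m + 1) (ℓ m), c r) = 1 ∧
      ∀ x ∈ Set.Icc (0 : ℝ) 1,
        x - Psi χ h x = χ 0 * ∑ r ∈ Finset.Icc (m + 1) (ℓ m), c r * Bge (ℓ m) r x := by
  -- monotonicity facts
  have hstrict : ∀ k, k ≤ m → ∀ j, 1 ≤ j → j < k → ℓ j < ℓ k := by
    intro k
    induction k with
    | zero => omega
    | succ k ih =>
      intro hk j hj hjk
      rcases Nat.lt_or_ge j k with hlt | hge
      · exact lt_trans (ih (by omega) j hj hlt) (hinc k (by omega) (by omega))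
      · have : j = k := by omega
        subst this
        exact hinc j hj (by omega)
  have hge2 : ∀ k, 1 ≤ k → k ≤ m → k + 1 ≤ ℓ k := by
    intro k hk1 hkm
    induction k with
    | zero => omega
    | succ k ih =>
      rcases Nat.eq_or_lt_of_le hk1 with h1 | h1
      · have hk0 : k = 0 := by omega
        subst hk0
        simpa using hℓ1
      · have hk : 1 ≤ k := by omega
        have := ih (by omega) (by omega)
        have := hinc k hk (by omega)
        omega
  have hinj : ∀ a ∈ Finset.Icc 1 m, ∀ b ∈ Finset.Icc 1 m, ℓ a = ℓ b → a = b := by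
    intro a ha b hb hab
    simp only [Finset.mem_Icc] at ha hb
    by_contra hne
    rcases Nat.lt_or_ge a b with hlt | hge
    · have := hstrict b hb.2 a ha.1 hlt; omega
    · have hlt : b < a := by omega
      have := hstrict a ha.2 b hb.1 hlt; omega
  set Ψp : ℝ[X] := ∑ k ∈ Finset.Icc 1 m, C (χ (ℓ k)) * BgePoly (ℓ k) k with hΨp
  -- Psi agrees with Ψp everywhere
  have hPsi_eval : ∀ x : ℝ, Psi χ h x = Ψp.eval x := by
    intro x
    have hts : Psi χ h x = ∑ n ∈ (Finset.Icc 1 m).image ℓ, χ n * Bge n (h n) x := by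
      apply tsum_eq_sum
      intro b hb
      by_cases hb0 : χ b = 0
      · rw [hb0, zero_mul]
      · rcases hsupp b hb0 with rfl | ⟨k, hk1, hkm, hkb⟩
        · have : Bge 0 (h 0) x = 0 := by
            rw [Bge, Finset.Icc_eq_empty (by have := hh 0; omega), Finset.sum_empty]
          rw [this, mul_zero]
        · exact absurd (Finset.mem_image.mpr ⟨k, Finset.mem_Icc.mpr ⟨hk1, hkm⟩, hkb⟩) hb
    rw [hts, Finset.sum_image hinj, hΨp, eval_finset_sum]
    apply Finset.sum_congr rfl
    intro k hk
    simp only [Finset.mem_Icc] at hk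
    rw [hhℓ k hk.1 hk.2, eval_mul, eval_C, BgePoly_eval]
  -- total mass
  have hχsum : χ 0 + ∑ k ∈ Finset.Icc 1 m, χ (ℓ k) = 1 := by
    have h0im : (0 : ℕ) ∉ (Finset.Icc 1 m).image ℓ := by
      simp only [Finset.mem_image, not_exists]
      rintro k ⟨hk, hk0⟩
      simp only [Finset.mem_Icc] at hk
      have := hge2 k hk.1 hk.2
      omega
    have hts : (∑' n, χ n) = ∑ n ∈ insert 0 ((Finset.Icc 1 m).image ℓ), χ n := by
      apply tsum_eq_sum
      intro b hb
      by_contra hb0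
      rcases hsupp b hb0 with rfl | ⟨k, hk1, hkm, hkb⟩
      · exact hb (Finset.mem_insert_self 0 _)
      · exact hb (Finset.mem_insert_of_mem
          (Finset.mem_image.mpr ⟨k, Finset.mem_Icc.mpr ⟨hk1, hkm⟩, hkb⟩))
    rw [hχ.2.2] at hts
    rw [Finset.sum_insert h0im, Finset.sum_image hinj] at hts
    linarith
  -- concordance to coefficients
  have hc1 : Ψp.coeff 1 = 1 := by
    have := hconc.1 hm
    have heq : iteratedDerivWithin 1 (Psi χ h) (Set.Icc (0:ℝ) 1) 0
        = iteratedDerivWithin 1 (fun y => Ψp.eval y) (Set.Icc (0:ℝ) 1) 0 := by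
      congr 1
      funext y
      exact hPsi_eval y
    rw [heq, poly_iDW_coeff] at this
    simpa using this
  have hck : ∀ k, 2 ≤ k → k ≤ m → Ψp.coeff k = 0 := by
    intro k h2 hkm
    have := hconc.2 k h2 hkm
    have heq : iteratedDerivWithin k (Psi χ h) (Set.Icc (0:ℝ) 1) 0
        = iteratedDerivWithin k (fun y => Ψp.eval y) (Set.Icc (0:ℝ) 1) 0 := by
      congr 1
      funext y
      exact hPsi_eval y
    rw [heq, poly_iDW_coeff] at this
    have hfac : (Nat.factorial k : ℝ) ≠ 0 := by
      exact_mod_cast Nat.factorial_ne_zero k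
    exact (mul_eq_zero.mp this).resolve_left hfac
  -- the derivative polynomial
  set a : ℕ → ℝ := fun j => χ (ℓ j) * ((j * (ℓ j).choose j : ℕ) : ℝ) with ha
  have hP : derivative Ψp
      = ∑ j ∈ Finset.Icc 1 m, C (a j) * (X ^ (j - 1) * (1 - X) ^ (ℓ j - j)) := by
    rw [hΨp, map_sum]
    apply Finset.sum_congr rfl
    intro j hj
    simp only [Finset.mem_Icc] at hj
    rw [derivative_C_mul, BgePoly_derivative (ℓ j) j hj.1 (by have := hge2 j hj.1 hj.2; omega)]
    rw [ha, ← mul_assoc, ← C_mul]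
  have hPcoeff : ∀ j, j + 1 ≤ m →
      (derivative Ψp).coeff j = if j = 0 then 1 else 0 := by
    intro j hj
    rw [coeff_derivative]
    rcases Nat.eq_zero_or_pos j with rfl | hj0
    · simp [hc1]
    · rw [hck (j + 1) (by omega) (by omega)]
      simp only [zero_mul]
      rw [if_neg (by omega)]
  -- the main induction
  set ℓ' : ℕ → ℕ := fun k => if k = 0 then 1 else ℓ k with hℓ'
  set G : ℕ → ℝ[X] :=
    fun k => 1 - ∑ j ∈ Finset.Icc 1 k, C (a j) * (X ^ (j - 1) * (1 - X) ^ (ℓ j - j)) with hG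
  have main : ∀ k, k ≤ m → (∀ j, 1 ≤ j → j ≤ k → 0 < a j) ∧
      ∃ e : ℕ → ℝ, (∀ s ∈ Finset.Icc k (ℓ' k - 1), 0 < e s) ∧
        G k = ∑ s ∈ Finset.Icc k (ℓ' k - 1), C (e s) * (X ^ s * (1 - X) ^ (ℓ' k - 1 - s)) := by
    intro k
    induction k with
    | zero =>
      intro _
      refine ⟨by omega, fun _ => 1, fun s _ => one_pos, ?_⟩
      simp [hG, hℓ']
    | succ k ihk =>
      intro hk1
      obtain ⟨hapos, e, hepos, hGk⟩ := ihk (by omega)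
      have hℓ'succ : ℓ' (k + 1) = ℓ (k + 1) := by simp [hℓ']
      have hℓ'0 : ℓ' 0 = 1 := by simp [hℓ']
      have hℓ'pos : ∀ j : ℕ, j ≠ 0 → ℓ' j = ℓ j := by intro j hj; simp [hℓ', hj]
      set d : ℕ := ℓ' k - 1 with hd
      set D : ℕ := ℓ (k + 1) - 1 with hD
      have hkd : k ≤ d := by
        rcases Nat.eq_zero_or_pos k with rfl | hk0
        · omega
        · have h1 := hge2 k hk0 (by omega)
          have h2 := hℓ'pos k (by omega)
          omega
      have hdD : d < D := by
        rcases Nat.eq_zero_or_pos k with rfl | hk0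
        · have h0 : D = ℓ 1 - 1 := by rw [hD]
          omega
        · have h1 := hinc k hk0 (by omega)
          have h2 := hge2 k hk0 (by omega)
          have h3 := hℓ'pos k (by omega)
          omega
      have hkD : k ≤ D := by omega
      -- elevation
      have helev : G k = ∑ s ∈ Finset.Icc k d, ∑ i ∈ Finset.range (D - d + 1),
          C (e s * ((D - d).choose i : ℝ)) * (X ^ (s + i) * (1 - X) ^ (D - (s + i))) := by
        rw [hGk]
        apply Finset.sum_congr rfl
        intro s hs
        obtain ⟨hs1, hs2⟩ := Finset.mem_Icc.mp hs
        have hone := one_eq_sum_XI (D - d)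
        calc C (e s) * (X ^ s * (1 - X) ^ (d - s))
            = C (e s) * (X ^ s * (1 - X) ^ (d - s)) * ∑ i ∈ Finset.range (D - d + 1),
                C (((D - d).choose i : ℝ)) * (X ^ i * (1 - X) ^ (D - d - i)) := by
              rw [← hone]; ring
          _ = _ := by
              rw [Finset.mul_sum]
              apply Finset.sum_congr rfl
              intro i hi
              have hi' : i ≤ D - d := by
                have := Finset.mem_range.mp hi; omega
              rw [C_mul, pow_add,
                show D - (s + i) = (d - s) + (D - d - i) by omega, pow_add]
              ring
      -- fiberwise collection
      set E : ℕ → ℝ := fun s' =>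
        ∑ p ∈ ((Finset.Icc k d) ×ˢ (Finset.range (D - d + 1))).filter
            (fun p => p.1 + p.2 = s'), e p.1 * ((D - d).choose p.2 : ℝ) with hE
      have hmaps : ∀ p ∈ (Finset.Icc k d) ×ˢ (Finset.range (D - d + 1)),
          p.1 + p.2 ∈ Finset.Icc k D := by
        intro p hp
        rw [Finset.mem_product] at hp
        obtain ⟨h1, h2⟩ := hp
        rw [Finset.mem_Icc] at h1 ⊢
        rw [Finset.mem_range] at h2
        omega
      have hfib : G k = ∑ s' ∈ Finset.Icc k D, C (E s') * (X ^ s' * (1 - X) ^ (D - s')) := by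
        rw [helev, ← Finset.sum_product']
        rw [← Finset.sum_fiberwise_of_maps_to hmaps
          (fun p => C (e p.1 * ((D - d).choose p.2 : ℝ)) * (X ^ (p.1 + p.2) * (1 - X) ^ (D - (p.1 + p.2))))]
        apply Finset.sum_congr rfl
        intro s' _
        have : ∀ p ∈ ((Finset.Icc k d) ×ˢ (Finset.range (D - d + 1))).filter
            (fun p => p.1 + p.2 = s'),
            C (e p.1 * ((D - d).choose p.2 : ℝ)) * (X ^ (p.1 + p.2) * (1 - X) ^ (D - (p.1 + p.2)))
            = C (e p.1 * ((D - d).choose p.2 : ℝ)) * (X ^ s' * (1 - X) ^ (D - s')) := by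
          intro p hp
          obtain ⟨-, hp2⟩ := Finset.mem_filter.mp hp
          rw [hp2]
        rw [Finset.sum_congr rfl this, ← Finset.sum_mul, hE, ← map_sum C]
      -- positivity of E
      have hEpos : ∀ s' ∈ Finset.Icc k D, 0 < E s' := by
        intro s' hs'
        obtain ⟨h1, h2⟩ := Finset.mem_Icc.mp hs'
        apply Finset.sum_pos'
        · intro p hp
          obtain ⟨hp1, -⟩ := Finset.mem_filter.mp hp
          rw [Finset.mem_product, Finset.mem_Icc] at hp1
          exact mul_nonneg (le_of_lt (hepos p.1 (Finset.mem_Icc.mpr hp1.1))) (by positivity)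
        · refine ⟨(min s' d, s' - min s' d), ?_, ?_⟩
          · rw [Finset.mem_filter, Finset.mem_product, Finset.mem_Icc, Finset.mem_range]
            refine ⟨⟨⟨?_, ?_⟩, ?_⟩, ?_⟩ <;> omega
          · apply mul_pos (hepos _ (Finset.mem_Icc.mpr ⟨by omega, by omega⟩))
            have : s' - min s' d ≤ D - d := by omega
            exact_mod_cast Nat.cast_pos.mpr (Nat.choose_pos this)
      -- G (k+1) in terms of G k
      have hGsucc : G (k + 1) = G k - C (a (k + 1)) * (X ^ k * (1 - X) ^ (D - k)) := by
        rw [hG]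
        simp only
        rw [Finset.sum_Icc_succ_top (by omega : 1 ≤ k + 1)]
        have he1 : k + 1 - 1 = k := by omega
        have he2 : ℓ (k + 1) - (k + 1) = D - k := by
          have := hge2 (k + 1) (by omega) hk1
          omega
        rw [he1, he2]
        ring
      -- the coefficient-k condition
      have hcoeffG : (G (k + 1)).coeff k = 0 := by
        have hsub : ∑ j ∈ Finset.Icc 1 (k + 1),
            (C (a j) * (X ^ (j - 1) * (1 - X) ^ (ℓ j - j))).coeff k
            = ∑ j ∈ Finset.Icc 1 m,
            (C (a j) * (X ^ (j - 1) * (1 - X) ^ (ℓ j - j))).coeff k := by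
          apply Finset.sum_subset
          · intro j hj
            rw [Finset.mem_Icc] at hj ⊢
            omega
          · intro j hj1 hj2
            rw [Finset.mem_Icc] at hj1
            rw [Finset.mem_Icc] at hj2
            have hjk : k < j - 1 := by omega
            rw [coeff_C_mul, coeff_XI_lt _ _ _ hjk, mul_zero]
        have hPc := hPcoeff k hk1
        rw [hP, finset_sum_coeff] at hPc
        rw [hG]
        simp only [coeff_sub, finset_sum_coeff, hsub, hPc]
        rcases Nat.eq_zero_or_pos k with rfl | hk0
        · simp
        · rw [if_neg (by omega), coeff_one, if_neg (by omega)]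
          ring
      -- extract : E k = a (k+1)
      have hEk : E k = a (k + 1) := by
        have h1 : (G (k + 1)).coeff k = E k - a (k + 1) := by
          rw [hGsucc, coeff_sub, hfib, finset_sum_coeff]
          rw [Finset.sum_eq_single k]
          · rw [coeff_C_mul, coeff_C_mul, coeff_XI_self]
            ring
          · intro s' hs' hne
            obtain ⟨hh1, -⟩ := Finset.mem_Icc.mp hs'
            rw [coeff_C_mul, coeff_XI_lt _ _ _ (by omega), mul_zero]
          · intro hk'
            exact absurd (Finset.mem_Icc.mpr ⟨le_rfl, hkD⟩) hk'
        rw [hcoeffG] at h1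
        linarith
      have hak1 : 0 < a (k + 1) := by
        rw [← hEk]
        exact hEpos k (Finset.mem_Icc.mpr ⟨le_rfl, hkD⟩)
      -- conclude
      refine ⟨?_, E, ?_, ?_⟩
      · intro j hj1 hj2
        rcases Nat.lt_or_ge j (k + 1) with hlt | hge
        · exact hapos j hj1 (by omega)
        · have : j = k + 1 := by omega
          subst this
          exact hak1
      · intro s hs
        rw [hℓ'succ] at hs
        rw [Finset.mem_Icc] at hs
        exact hEpos s (Finset.mem_Icc.mpr ⟨by omega, by omega⟩)
      · rw [hℓ'succ, show ℓ (k + 1) - 1 = D from rfl]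
        rw [hGsucc, hfib,
          show Finset.Icc k D = insert k (Finset.Icc (k + 1) D) by
            ext j; simp only [Finset.mem_insert, Finset.mem_Icc]; omega,
          Finset.sum_insert (by simp), ← hEk]
        ring
  -- assemble
  obtain ⟨hapos, e, hepos, hGm⟩ := main m le_rfl
  have hℓ'm : ℓ' m = ℓ m := by simp [hℓ', show m ≠ 0 by omega]
  rw [hℓ'm] at hepos hGm
  have hmN : m + 1 ≤ ℓ m := hge2 m hm le_rfl
  -- positivity of χ (ℓ k)
  have hχpos : ∀ k, 1 ≤ k → k ≤ m → 0 < χ (ℓ k) := by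
    intro k hk1 hkm
    have hak := hapos k hk1 hkm
    have hcpos : (0:ℝ) < ((k * (ℓ k).choose k : ℕ) : ℝ) := by
      have h1 : 0 < k * (ℓ k).choose k :=
        Nat.mul_pos hk1 (Nat.choose_pos (by have := hge2 k hk1 hkm; omega))
      exact_mod_cast h1
    rw [ha] at hak
    simp only at hak
    rcases mul_pos_iff.mp hak with ⟨h1, -⟩ | ⟨-, h2⟩
    · exact h1
    · linarith
  -- the b coefficients
  set b : ℕ → ℝ := fun r => e (r - 1) / ((r * (ℓ m).choose r : ℕ) : ℝ) with hb
  have hcastpos : ∀ r, m + 1 ≤ r → r ≤ ℓ m → (0:ℝ) < ((r * (ℓ m).choose r : ℕ) : ℝ) := by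
    intro r h1 h2
    have : 0 < r * (ℓ m).choose r := Nat.mul_pos (by omega) (Nat.choose_pos h2)
    exact_mod_cast this
  have hbpos : ∀ r ∈ Finset.Icc (m + 1) (ℓ m), 0 < b r := by
    intro r hr
    obtain ⟨h1, h2⟩ := Finset.mem_Icc.mp hr
    exact div_pos (hepos (r - 1) (Finset.mem_Icc.mpr ⟨by omega, by omega⟩)) (hcastpos r h1 h2)
  set Qr : ℝ[X] := ∑ r ∈ Finset.Icc (m + 1) (ℓ m), C (b r) * BgePoly (ℓ m) r with hQr
  -- derivative identity
  have hder : derivative (X - Ψp) = derivative Qr := by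
    rw [derivative_sub, derivative_X, hP, hQr, map_sum]
    have hrw : ∀ r ∈ Finset.Icc (m + 1) (ℓ m),
        derivative (C (b r) * BgePoly (ℓ m) r)
          = C (e (r - 1)) * (X ^ (r - 1) * (1 - X) ^ (ℓ m - r)) := by
      intro r hr
      obtain ⟨h1, h2⟩ := Finset.mem_Icc.mp hr
      rw [derivative_C_mul, BgePoly_derivative (ℓ m) r (by omega) h2, ← mul_assoc, ← C_mul]
      congr 1
      have hne : ((r * (ℓ m).choose r : ℕ) : ℝ) ≠ 0 := ne_of_gt (hcastpos r h1 h2)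
      simp only [hb]
      exact congrArg C (div_mul_cancel₀ _ hne)
    rw [Finset.sum_congr rfl hrw]
    have hmap : Finset.Icc (m + 1) (ℓ m)
        = Finset.map ⟨fun s => s + 1, add_left_injective 1⟩ (Finset.Icc m (ℓ m - 1)) := by
      ext j
      simp only [Finset.mem_map, Finset.mem_Icc, Function.Embedding.coeFn_mk]
      constructor
      · intro hj; exact ⟨j - 1, ⟨by omega, by omega⟩, by omega⟩
      · rintro ⟨s, hs, rfl⟩; omega
    rw [hmap, Finset.sum_map]
    simp only [Function.Embedding.coeFn_mk, Nat.add_sub_cancel]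
    have : (1 : ℝ[X]) - ∑ j ∈ Finset.Icc 1 m, C (a j) * (X ^ (j - 1) * (1 - X) ^ (ℓ j - j))
        = G m := by rw [hG]
    rw [this, hGm]
    apply Finset.sum_congr rfl
    intro s hs
    obtain ⟨h1, h2⟩ := Finset.mem_Icc.mp hs
    rw [show ℓ m - (s + 1) = ℓ m - 1 - s from by omega]
  -- polynomial identity
  have hXQ : X - Ψp = Qr := by
    have hd0 : derivative (X - Ψp - Qr) = 0 := by
      rw [derivative_sub, hder, sub_self]
    have hC := Polynomial.eq_C_of_derivative_eq_zero hd0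
    have hΨp0 : Ψp.coeff 0 = 0 := by
      rw [hΨp, finset_sum_coeff]
      apply Finset.sum_eq_zero
      intro k hk
      obtain ⟨h1, -⟩ := Finset.mem_Icc.mp hk
      rw [coeff_C_mul, BgePoly_coeff_zero _ _ h1, mul_zero]
    have hQr0 : Qr.coeff 0 = 0 := by
      rw [hQr, finset_sum_coeff]
      apply Finset.sum_eq_zero
      intro r hr
      obtain ⟨h1, -⟩ := Finset.mem_Icc.mp hr
      rw [coeff_C_mul, BgePoly_coeff_zero _ _ (by omega), mul_zero]
    have hc0 : (X - Ψp - Qr).coeff 0 = 0 := by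
      simp [coeff_sub, hΨp0, hQr0]
    rw [hc0, map_zero] at hC
    exact sub_eq_zero.mp hC
  -- χ 0 as the sum of b
  have hΨp1 : Ψp.eval 1 = ∑ k ∈ Finset.Icc 1 m, χ (ℓ k) := by
    rw [hΨp, eval_finset_sum]
    apply Finset.sum_congr rfl
    intro k hk
    obtain ⟨h1, h2⟩ := Finset.mem_Icc.mp hk
    rw [eval_mul, eval_C, BgePoly_eval_one _ _ (by have := hge2 k h1 h2; omega), mul_one]
  have hQr1 : Qr.eval 1 = ∑ r ∈ Finset.Icc (m + 1) (ℓ m), b r := by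
    rw [hQr, eval_finset_sum]
    apply Finset.sum_congr rfl
    intro r hr
    obtain ⟨h1, h2⟩ := Finset.mem_Icc.mp hr
    rw [eval_mul, eval_C, BgePoly_eval_one _ _ h2, mul_one]
  have hchi0 : χ 0 = ∑ r ∈ Finset.Icc (m + 1) (ℓ m), b r := by
    have h1 : (X - Ψp : ℝ[X]).eval 1 = Qr.eval 1 := by rw [hXQ]
    rw [eval_sub, eval_X, hΨp1, hQr1] at h1
    linarith
  have hχ0pos : 0 < χ 0 := by
    rw [hchi0]
    apply Finset.sum_pos hbpos
    exact ⟨m + 1, Finset.mem_Icc.mpr ⟨le_rfl, hmN⟩⟩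
  -- construct c
  refine ⟨hχ0pos, hχpos, fun r => if r ∈ Finset.Icc (m + 1) (ℓ m) then b r / χ 0 else 0, ?_, ?_, ?_⟩
  · intro r
    beta_reduce
    by_cases hr : r ∈ Finset.Icc (m + 1) (ℓ m)
    · rw [if_pos hr]
      exact le_of_lt (div_pos (hbpos r hr) hχ0pos)
    · rw [if_neg hr]
  · beta_reduce
    rw [Finset.sum_congr rfl (fun r hr => if_pos hr), ← Finset.sum_div, ← hchi0,
      div_self (ne_of_gt hχ0pos)]
  · intro x hx
    beta_reduce
    have h1 : x - Psi χ h x = (X - Ψp : ℝ[X]).eval x := by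
      rw [eval_sub, eval_X, hPsi_eval]
    rw [h1, hXQ, hQr, eval_finset_sum, Finset.mul_sum]
    apply Finset.sum_congr rfl
    intro r hr
    rw [if_pos hr, eval_mul, eval_C, BgePoly_eval]
    field_simp
end

section
/- Let 2 ≤ ℓ_1 < ℓ_2 < ⋯ < ℓ_m be integers, let h be a threshold function with h(ℓ_k) = k for each k, and let χ = crit(ℓ_1,…,ℓ_m) be the unique child distribution supported within {0, ℓ_1, …, ℓ_m} for which (χ,h) is m-concordant, with automaton distribution map Ψ. Then (χ,h) is (m+1)-subcordant, i.e., Ψ^{(m+1)}(0) < 0. -/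
namespace Stmt12Aux
open Finset PowerSeries

/-! ### Power series preliminaries: the inverse of `(1 - X) ^ e` -/

noncomputable def G (e : ℕ) : PowerSeries ℝ := (PowerSeries.invOneSubPow ℝ e).val

lemma oneSub_pow_mul_G (e : ℕ) : ((1 - PowerSeries.X) ^ e : PowerSeries ℝ) * G e = 1 := by
  have h := (PowerSeries.invOneSubPow ℝ e).inv_val
  rwa [PowerSeries.invOneSubPow_inv_eq_one_sub_pow] at h

lemma coeff_G_of_pos (e n : ℕ) (he : 1 ≤ e) :
    PowerSeries.coeff n (G e) = ((e - 1 + n).choose (e - 1) : ℝ) := by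
  rw [G, PowerSeries.invOneSubPow_val_eq_mk_sub_one_add_choose_of_pos _ _ he,
    PowerSeries.coeff_mk]

lemma coeff_G_pos (e n : ℕ) (he : 1 ≤ e) : 0 < PowerSeries.coeff n (G e) := by
  rw [coeff_G_of_pos e n he]
  exact_mod_cast Nat.choose_pos (Nat.le_add_right _ _)

lemma coeff_G_nonneg (e n : ℕ) : 0 ≤ PowerSeries.coeff n (G e) := by
  rcases Nat.eq_zero_or_pos e with rfl | he
  · rw [G, PowerSeries.invOneSubPow_zero]
    simp only [Units.val_one, PowerSeries.coeff_one]
    positivity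
  · exact (coeff_G_pos e n he).le

lemma coeff_zero_G (e : ℕ) : PowerSeries.coeff 0 (G e) = 1 := by
  rcases Nat.eq_zero_or_pos e with rfl | he
  · rw [G, PowerSeries.invOneSubPow_zero]; simp
  · rw [coeff_G_of_pos e 0 he]; simp

lemma G_mul (a b : ℕ) : G a * G b = G (a + b) := by
  have h1 : ((1 - PowerSeries.X) ^ (a + b) : PowerSeries ℝ) * (G a * G b) = 1 := by
    rw [pow_add, mul_mul_mul_comm, oneSub_pow_mul_G, oneSub_pow_mul_G, one_mul]
  calc G a * G b = ((1 - PowerSeries.X) ^ (a + b) * G (a + b)) * (G a * G b) := by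
        rw [oneSub_pow_mul_G, one_mul]
    _ = ((1 - PowerSeries.X) ^ (a + b) * (G a * G b)) * G (a + b) := by ring
    _ = G (a + b) := by rw [h1, one_mul]

lemma pow_mul_G (a b : ℕ) : ((1 - PowerSeries.X) ^ a : PowerSeries ℝ) * G (a + b) = G b := by
  rw [← G_mul a b, ← mul_assoc, oneSub_pow_mul_G, one_mul]

lemma coeff_mul_low (A B : PowerSeries ℝ) (s : ℕ)
    (hA : ∀ t, t < s → PowerSeries.coeff t A = 0) :
    PowerSeries.coeff s (A * B) = PowerSeries.coeff s A * PowerSeries.coeff 0 B := by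
  rw [PowerSeries.coeff_mul]
  apply Finset.sum_eq_single (s, 0)
  · rintro ⟨b1, b2⟩ hb hne
    rw [Finset.HasAntidiagonal.mem_antidiagonal] at hb
    have hne' : b1 ≠ s ∨ b2 ≠ 0 := by
      by_contra hc
      push_neg at hc
      exact hne (by simp [hc.1, hc.2])
    have hb1 : b1 < s := by omega
    rw [hA b1 hb1, zero_mul]
  · intro hmem
    exact absurd (by simp : (s, 0) ∈ Finset.HasAntidiagonal.antidiagonal s) hmem

/-! ### The core combinatorial positivity argument -/

noncomputable def trm (e : ℕ → ℕ) (d : ℕ → ℝ) (k : ℕ) : PowerSeries ℝ :=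
  PowerSeries.C (d k) * (1 - PowerSeries.X) ^ e k * PowerSeries.X ^ (k - 1)

noncomputable def Ssum (e : ℕ → ℕ) (d : ℕ → ℝ) (j : ℕ) : PowerSeries ℝ :=
  ∑ k ∈ Finset.Ioc 0 j, trm e d k

noncomputable def Usum (e : ℕ → ℕ) (d : ℕ → ℝ) (m j : ℕ) : PowerSeries ℝ :=
  (1 - Ssum e d j) * G (e (min (j + 1) m))

lemma coeff_trm_low (e : ℕ → ℕ) (d : ℕ → ℝ) (k s : ℕ) (h : s < k - 1) :
    PowerSeries.coeff s (trm e d k) = 0 := by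
  rw [trm, PowerSeries.coeff_mul_X_pow', if_neg (by omega)]

lemma coeff_trm_diag (e : ℕ → ℕ) (d : ℕ → ℝ) (k : ℕ) :
    PowerSeries.coeff (k - 1) (trm e d k) = d k := by
  rw [trm, PowerSeries.coeff_mul_X_pow', if_pos le_rfl, Nat.sub_self]
  simp [PowerSeries.coeff_zero_eq_constantCoeff, map_pow]

section core
variable (m : ℕ) (e : ℕ → ℕ) (d : ℕ → ℝ)

lemma claimA (h0 : PowerSeries.coeff 0 (Ssum e d m) = 1)
    (hs : ∀ s, 1 ≤ s → s < m → PowerSeries.coeff s (Ssum e d m) = 0) :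
    ∀ j, j ≤ m → ∀ s, s < j → PowerSeries.coeff s (1 - Ssum e d j) = 0 := by
  intro j hj s hsj
  have hsplit : Ssum e d j + ∑ k ∈ Finset.Ioc j m, trm e d k = Ssum e d m :=
    Finset.sum_Ioc_consecutive _ (Nat.zero_le j) hj
  have h1 : (1 : PowerSeries ℝ) - Ssum e d j
      = (1 - Ssum e d m) + ∑ k ∈ Finset.Ioc j m, trm e d k := by
    rw [← hsplit]; ring
  rw [h1, map_add, map_sub]
  have h2 : PowerSeries.coeff s (1 : PowerSeries ℝ) - PowerSeries.coeff s (Ssum e d m) = 0 := by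
    rcases Nat.eq_zero_or_pos s with rfl | hspos
    · rw [h0, PowerSeries.coeff_one]; simp
    · rw [hs s hspos (by omega), PowerSeries.coeff_one, if_neg (by omega)]; simp
  rw [h2, zero_add, map_sum]
  apply Finset.sum_eq_zero
  intro k hk
  rw [Finset.mem_Ioc] at hk
  exact coeff_trm_low e d k s (by omega)

lemma claimB (h0 : PowerSeries.coeff 0 (Ssum e d m) = 1)
    (hs : ∀ s, 1 ≤ s → s < m → PowerSeries.coeff s (Ssum e d m) = 0) :
    ∀ j, j < m → PowerSeries.coeff j (1 - Ssum e d j) = d (j + 1) := by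
  intro j hj
  have hsplit : Ssum e d j + ∑ k ∈ Finset.Ioc j m, trm e d k = Ssum e d m :=
    Finset.sum_Ioc_consecutive _ (Nat.zero_le j) (le_of_lt hj)
  have h1 : (1 : PowerSeries ℝ) - Ssum e d j
      = (1 - Ssum e d m) + ∑ k ∈ Finset.Ioc j m, trm e d k := by
    rw [← hsplit]; ring
  rw [h1, map_add, map_sub]
  have h2 : PowerSeries.coeff j (1 : PowerSeries ℝ) - PowerSeries.coeff j (Ssum e d m) = 0 := by
    rcases Nat.eq_zero_or_pos j with rfl | hjpos
    · rw [h0, PowerSeries.coeff_one]; simp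
    · rw [hs j hjpos hj, PowerSeries.coeff_one, if_neg (by omega)]; simp
  rw [h2, zero_add]
  have hsum : ∑ k ∈ Finset.Ioc j m, PowerSeries.coeff j (trm e d k) = d (j + 1) := by
    rw [Finset.sum_eq_single (j + 1)]
    · exact coeff_trm_diag e d (j + 1)
    · intro k hk hne
      rw [Finset.mem_Ioc] at hk
      exact coeff_trm_low e d k j (by omega)
    · intro hmem
      exact absurd (Finset.mem_Ioc.mpr ⟨by omega, by omega⟩) hmem
  rw [map_sum]
  exact hsum

lemma invariant (hm : 1 ≤ m) (he1 : 1 ≤ e 1)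
    (hemono : ∀ k, 1 ≤ k → k < m → e k ≤ e (k + 1))
    (h0 : PowerSeries.coeff 0 (Ssum e d m) = 1)
    (hs : ∀ s, 1 ≤ s → s < m → PowerSeries.coeff s (Ssum e d m) = 0) :
    ∀ j, j ≤ m → (∀ s, s < j → PowerSeries.coeff s (Usum e d m j) = 0) ∧
      (∀ s, j ≤ s → 0 < PowerSeries.coeff s (Usum e d m j)) := by
  intro j
  induction j with
  | zero =>
    intro _
    constructor
    · intro s hs'; omega
    · intro s _
      have hU : Usum e d m 0 = G (e 1) := by
        rw [Usum, Ssum]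
        simp [Nat.min_eq_left hm]
      rw [hU]
      exact coeff_G_pos _ _ he1
  | succ j ih =>
    intro hj1
    have hj : j < m := by omega
    obtain ⟨ih1, ih2⟩ := ih (le_of_lt hj)
    have hεj : min (j + 1) m = j + 1 := Nat.min_eq_left hj1
    have hle : e (j + 1) ≤ e (min (j + 1 + 1) m) := by
      rcases eq_or_lt_of_le hj1 with h | h
      · rw [show min (j + 1 + 1) m = m by omega, ← h]
      · rw [Nat.min_eq_left (by omega)]
        exact hemono (j + 1) (by omega) (by omega)
    obtain ⟨b, hb⟩ := Nat.exists_eq_add_of_le hle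
    have hSsucc : Ssum e d (j + 1) = Ssum e d j + trm e d (j + 1) :=
      Finset.sum_Ioc_succ_top (Nat.zero_le j) _
    have hdj : d (j + 1) = PowerSeries.coeff j (Usum e d m j) := by
      rw [Usum, coeff_mul_low _ _ j (claimA m e d h0 hs j (le_of_lt hj)),
        claimB m e d h0 hs j hj, coeff_zero_G, mul_one]
    have hkey : Usum e d m (j + 1)
        = (Usum e d m j - PowerSeries.C (d (j + 1)) * PowerSeries.X ^ j) * G b := by
      have h2 : (1 - Ssum e d j) * G (e (min (j + 1 + 1) m)) = Usum e d m j * G b := by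
        rw [Usum, hεj, hb, ← G_mul (e (j + 1)) b]; ring
      have h3 : trm e d (j + 1) * G (e (min (j + 1 + 1) m))
          = PowerSeries.C (d (j + 1)) * PowerSeries.X ^ j * G b := by
        rw [trm, hb, show j + 1 - 1 = j from rfl]
        calc PowerSeries.C (d (j + 1)) * (1 - PowerSeries.X) ^ e (j + 1) *
              PowerSeries.X ^ j * G (e (j + 1) + b)
            = PowerSeries.C (d (j + 1)) * PowerSeries.X ^ j *
              ((1 - PowerSeries.X) ^ e (j + 1) * G (e (j + 1) + b)) := by ring
          _ = PowerSeries.C (d (j + 1)) * PowerSeries.X ^ j * G b := by rw [pow_mul_G]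
      calc Usum e d m (j + 1)
          = (1 - Ssum e d j) * G (e (min (j + 1 + 1) m))
            - trm e d (j + 1) * G (e (min (j + 1 + 1) m)) := by
            rw [Usum, hSsucc]; ring
        _ = Usum e d m j * G b
            - PowerSeries.C (d (j + 1)) * PowerSeries.X ^ j * G b := by rw [h2, h3]
        _ = _ := by ring
    set V : PowerSeries ℝ := Usum e d m j - PowerSeries.C (d (j + 1)) * PowerSeries.X ^ j
      with hVdef
    have cV : ∀ t, PowerSeries.coeff t V
        = PowerSeries.coeff t (Usum e d m j) - (if t = j then d (j + 1) else 0) := by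
      intro t
      rw [hVdef, map_sub, PowerSeries.coeff_C_mul_X_pow]
    have hV0 : ∀ t, t ≤ j → PowerSeries.coeff t V = 0 := by
      intro t ht
      rcases eq_or_lt_of_le ht with rfl | hlt
      · rw [cV, if_pos rfl, ← hdj]; ring
      · rw [cV, if_neg (by omega), ih1 t hlt, sub_zero]
    have hVpos : ∀ t, j < t → 0 < PowerSeries.coeff t V := by
      intro t ht
      rw [cV, if_neg (by omega), sub_zero]
      exact ih2 t (by omega)
    have hVnonneg : ∀ t, 0 ≤ PowerSeries.coeff t V := by
      intro t
      rcases le_or_gt t j with h | h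
      · rw [hV0 t h]
      · exact (hVpos t h).le
    constructor
    · intro s hsj1
      rw [hkey, PowerSeries.coeff_mul]
      apply Finset.sum_eq_zero
      rintro ⟨t, u⟩ htu
      rw [Finset.HasAntidiagonal.mem_antidiagonal] at htu
      rw [hV0 t (by omega), zero_mul]
    · intro s hsj1
      rw [hkey, PowerSeries.coeff_mul]
      apply Finset.sum_pos'
      · rintro ⟨t, u⟩ _
        exact mul_nonneg (hVnonneg t) (coeff_G_nonneg b u)
      · refine ⟨(s, 0), Finset.HasAntidiagonal.mem_antidiagonal.mpr (by omega), ?_⟩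
        rw [coeff_zero_G, mul_one]
        exact hVpos s (by omega)

lemma core (hm : 1 ≤ m) (he1 : 1 ≤ e 1)
    (hemono : ∀ k, 1 ≤ k → k < m → e k ≤ e (k + 1))
    (h0 : PowerSeries.coeff 0 (∑ k ∈ Finset.Icc 1 m, trm e d k) = 1)
    (hs : ∀ s, 1 ≤ s → s < m → PowerSeries.coeff s (∑ k ∈ Finset.Icc 1 m, trm e d k) = 0) :
    PowerSeries.coeff m (∑ k ∈ Finset.Icc 1 m, trm e d k) < 0 := by
  have hIcc : Finset.Icc 1 m = Finset.Ioc 0 m := Finset.Icc_add_one_left_eq_Ioc 0 m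
  rw [hIcc] at h0 hs ⊢
  change PowerSeries.coeff m (Ssum e d m) < 0
  change PowerSeries.coeff 0 (Ssum e d m) = 1 at h0
  change ∀ s, 1 ≤ s → s < m → PowerSeries.coeff s (Ssum e d m) = 0 at hs
  obtain ⟨_, A2⟩ := invariant m e d hm he1 hemono h0 hs m le_rfl
  have hpos := A2 m le_rfl
  rw [Usum, coeff_mul_low _ _ m (claimA m e d h0 hs m le_rfl), coeff_zero_G, mul_one,
    map_sub, PowerSeries.coeff_one, if_neg (by omega)] at hpos
  linarith

end core

/-! ### Polynomial side -/

open Polynomial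

noncomputable def Bp (n k : ℕ) : Polynomial ℝ :=
  ∑ j ∈ Finset.Icc k n, Polynomial.C (n.choose j : ℝ) * Polynomial.X ^ j * (1 - Polynomial.X) ^ (n - j)

lemma Bge_eval (n k : ℕ) (x : ℝ) : Bge n k x = (Bp n k).eval x := by
  rw [Bge, Bp, Polynomial.eval_finset_sum]
  exact Finset.sum_congr rfl fun j _ => by simp

lemma Bp_zero (n k : ℕ) (hk : 1 ≤ k) (hn : n = 0) : Bp n k = 0 := by
  subst hn
  rw [Bp, Finset.Icc_eq_empty (by omega), Finset.sum_empty]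

lemma sum_Icc_telescope {M : Type*} [AddCommGroup M] (f : ℕ → M) (k n : ℕ) (hk : k ≤ n) :
    ∑ j ∈ Finset.Icc k n, (f j - f (j + 1)) = f k - f (n + 1) := by
  induction n with
  | zero => interval_cases k <;> simp
  | succ n ih =>
    rcases Nat.lt_or_ge k (n + 1) with h | h
    · rw [Finset.sum_Icc_succ_top (by omega : k ≤ n + 1), ih (by omega)]
      abel
    · have hkeq : k = n + 1 := by omega
      subst hkeq
      simp

noncomputable def Tp (n j : ℕ) : Polynomial ℝ :=
  Polynomial.C ((j : ℝ) * (n.choose j : ℝ)) * Polynomial.X ^ (j - 1) * (1 - Polynomial.X) ^ (n - j)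

lemma deriv_term (n j : ℕ) (hj : 1 ≤ j) (hjn : j ≤ n) :
    Polynomial.derivative (Polynomial.C (n.choose j : ℝ) * Polynomial.X ^ j * (1 - Polynomial.X) ^ (n - j))
      = Tp n j - Tp n (j + 1) := by
  have hc : ((n - j : ℕ) : ℝ) * (n.choose j : ℝ) = ((j : ℝ) + 1) * (n.choose (j + 1) : ℝ) := by
    have h1 : n.choose (j + 1) * (j + 1) = n.choose j * (n - j) := Nat.choose_succ_right_eq n j
    have h2 := congrArg (fun t : ℕ => (t : ℝ)) h1
    push_cast at h2
    linarith
  have hC : Polynomial.C ((n - j : ℕ) : ℝ) * Polynomial.C (n.choose j : ℝ)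
      = (Polynomial.C (j : ℝ) + 1) * Polynomial.C (n.choose (j + 1) : ℝ) := by
    rw [← map_mul]
    calc Polynomial.C (((n - j : ℕ) : ℝ) * (n.choose j : ℝ))
        = Polynomial.C (((j : ℝ) + 1) * (n.choose (j + 1) : ℝ)) := congrArg _ hc
      _ = _ := by rw [map_mul, map_add, map_one]
  rcases eq_or_lt_of_le hjn with rfl | hlt
  · have hch : j.choose (j + 1) = 0 := Nat.choose_succ_self j
    rw [Tp, Tp, hch, Nat.sub_self]
    simp only [Nat.cast_zero, mul_zero, map_zero, zero_mul, sub_zero, pow_zero, mul_one]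
    rw [Polynomial.derivative_mul, Polynomial.derivative_C, Polynomial.derivative_X_pow]
    simp only [map_mul]
    ring
  · have he : n - (j + 1) = n - j - 1 := by omega
    have hxj : (Polynomial.X : Polynomial ℝ) ^ j = Polynomial.X ^ (j - 1) * Polynomial.X := by
      rw [← pow_succ]
      congr 1
      omega
    have hox : ((1 : Polynomial ℝ) - Polynomial.X) ^ (n - j) = (1 - Polynomial.X) ^ (n - j - 1) * (1 - Polynomial.X) := by
      rw [← pow_succ]
      congr 1
      omega
    rw [Tp, Tp, he]
    rw [Polynomial.derivative_mul, Polynomial.derivative_mul, Polynomial.derivative_C,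
      Polynomial.derivative_X_pow, Polynomial.derivative_pow, Polynomial.derivative_sub,
      Polynomial.derivative_one, Polynomial.derivative_X]
    simp only [Nat.add_sub_cancel]
    rw [hxj, hox]
    push_cast
    simp only [map_mul, map_add, map_one]
    linear_combination (-(Polynomial.X ^ (j - 1) * Polynomial.X *
      (1 - Polynomial.X) ^ (n - j - 1))) * hC

lemma deriv_Bp (n k : ℕ) (hk : 1 ≤ k) (hkn : k ≤ n) :
    Polynomial.derivative (Bp n k) = Tp n k := by
  rw [Bp, map_sum]
  rw [Finset.sum_congr rfl fun j hj => deriv_term n j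
    (by exact le_trans hk (Finset.mem_Icc.mp hj).1) (Finset.mem_Icc.mp hj).2]
  rw [sum_Icc_telescope _ k n hkn]
  have hz : Tp n (n + 1) = 0 := by
    rw [Tp, Nat.choose_succ_self]
    simp
  rw [hz, sub_zero]

lemma contDiff_eval (p : Polynomial ℝ) :
    ContDiff ℝ ((⊤ : ℕ∞) : WithTop ℕ∞) fun x => p.eval x := by
  induction p using Polynomial.induction_on' with
  | add p q hp hq => simpa [Polynomial.eval_add] using hp.add hq
  | monomial i a =>
    simpa [Polynomial.eval_monomial] using (contDiff_const (c := a)).mul (contDiff_id.pow i)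

lemma iter_deriv_eval (p : Polynomial ℝ) (n : ℕ) :
    iteratedDeriv n (fun x => p.eval x) = fun x => (Polynomial.derivative^[n] p).eval x := by
  induction n with
  | zero => simp
  | succ n ih =>
    rw [iteratedDeriv_succ, ih, Function.iterate_succ_apply']
    funext x
    exact Polynomial.deriv (p := Polynomial.derivative^[n] p)

lemma iterWithin (f : ℝ → ℝ) (hf : ContDiff ℝ ((⊤ : ℕ∞) : WithTop ℕ∞) f) (n : ℕ) :
    iteratedDerivWithin n f (Set.Icc (0 : ℝ) 1) 0 = iteratedDeriv n f 0 := by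
  have h : HasFTaylorSeriesUpToOn (⊤ : ℕ∞) f (ftaylorSeries ℝ f) (Set.Icc (0 : ℝ) 1) :=
    (contDiff_iff_ftaylorSeries.mp hf).hasFTaylorSeriesUpToOn _
  have h2 := h.eq_iteratedFDerivWithin_of_uniqueDiffOn (by exact_mod_cast (le_top : (n : ℕ∞) ≤ ⊤))
    (uniqueDiffOn_Icc one_pos) (Set.left_mem_Icc.mpr zero_le_one)
  rw [iteratedDerivWithin, iteratedDeriv, ← h2]
  rfl

lemma iterWithin_poly (p : Polynomial ℝ) (n : ℕ) :
    iteratedDerivWithin n (fun x => p.eval x) (Set.Icc (0 : ℝ) 1) 0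
      = (n.factorial : ℝ) * p.coeff n := by
  rw [iterWithin _ (contDiff_eval p) n, iter_deriv_eval]
  show (Polynomial.derivative^[n] p).eval 0 = _
  rw [← Polynomial.coeff_zero_eq_eval_zero, Polynomial.coeff_iterate_derivative]
  simp [Nat.descFactorial_self, nsmul_eq_mul]

end Stmt12Aux

theorem stmt12 (m : ℕ) (hm : 1 ≤ m) (ℓ : ℕ → ℕ) (h : ℕ → ℕ)
    (hℓ1 : 2 ≤ ℓ 1)
    (hinc : ∀ k, 1 ≤ k → k < m → ℓ k < ℓ (k + 1))
    (hh : ∀ n, 1 ≤ h n)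
    (hhℓ : ∀ k, 1 ≤ k → k ≤ m → h (ℓ k) = k)
    (χ : ℕ → ℝ) (hχ : IsChildDist χ)
    (hsupp : ∀ n, χ n ≠ 0 → n = 0 ∨ ∃ k, 1 ≤ k ∧ k ≤ m ∧ ℓ k = n)
    (hconc : Concordant m (Psi χ h)) :
    iteratedDerivWithin (m + 1) (Psi χ h) (Set.Icc (0 : ℝ) 1) 0 < 0 := by
  classical
  have hℓlb : ∀ k, 1 ≤ k → k ≤ m → k + 1 ≤ ℓ k := by
    intro k
    induction k with
    | zero => omega
    | succ k ih =>
      intro _ hk1m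
      rcases Nat.eq_zero_or_pos k with rfl | hk
      · simpa using hℓ1
      · have h1 := ih (by omega) (by omega)
        have h2 := hinc k (by omega) (by omega)
        omega
  have hmono : ∀ a b, 1 ≤ a → a < b → b ≤ m → ℓ a < ℓ b := by
    intro a b ha hab
    induction b with
    | zero => omega
    | succ b ih =>
      intro hbm
      rcases Nat.lt_or_ge a b with hcase | hcase
      · exact lt_trans (ih hcase (by omega)) (hinc b (by omega) (by omega))
      · have haeq : a = b := by omega
        subst haeq
        exact hinc a (by omega) (by omega)
  set F : Finset ℕ := insert 0 ((Finset.Icc 1 m).image ℓ) with hF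
  set p : Polynomial ℝ := ∑ n ∈ F, Polynomial.C (χ n) * Stmt12Aux.Bp n (h n) with hpdef
  have hPsi : Psi χ h = fun x => p.eval x := by
    funext x
    rw [Psi]
    rw [tsum_eq_sum (s := F) ?hvan]
    · rw [hpdef, Polynomial.eval_finset_sum]
      exact Finset.sum_congr rfl fun n _ => by
        rw [Stmt12Aux.Bge_eval, Polynomial.eval_mul, Polynomial.eval_C]
    case hvan =>
      intro n hn
      have hzero : χ n = 0 := by
        by_contra hne
        rcases hsupp n hne with rfl | ⟨k, hk1, hkm, hkn⟩
        · exact hn (Finset.mem_insert_self _ _)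
        · exact hn (Finset.mem_insert_of_mem (Finset.mem_image.mpr
            ⟨k, Finset.mem_Icc.mpr ⟨hk1, hkm⟩, hkn⟩))
      rw [hzero, zero_mul]
  have hiter : ∀ r, iteratedDerivWithin r (Psi χ h) (Set.Icc (0 : ℝ) 1) 0
      = (r.factorial : ℝ) * p.coeff r := by
    intro r
    rw [hPsi]
    exact Stmt12Aux.iterWithin_poly p r
  have hc1 : p.coeff 1 = 1 := by
    have hx := hconc.1 hm
    rw [hiter 1] at hx
    simpa using hx
  have hck : ∀ k, 2 ≤ k → k ≤ m → p.coeff k = 0 := by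
    intro k h2 hkm
    have hx := hconc.2 k h2 hkm
    rw [hiter k] at hx
    have hfac : (k.factorial : ℝ) ≠ 0 := Nat.cast_ne_zero.mpr (Nat.factorial_ne_zero k)
    rcases mul_eq_zero.mp hx with hbad | hok
    · exact absurd hbad hfac
    · exact hok
  have h0F : (0 : ℕ) ∉ (Finset.Icc 1 m).image ℓ := by
    rw [Finset.mem_image]
    rintro ⟨k, hk, hk0⟩
    rw [Finset.mem_Icc] at hk
    have := hℓlb k hk.1 hk.2
    omega
  have hinj : ∀ a ∈ Finset.Icc 1 m, ∀ b ∈ Finset.Icc 1 m, ℓ a = ℓ b → a = b := by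
    intro a ha b hb hab
    rw [Finset.mem_Icc] at ha hb
    rcases Nat.lt_trichotomy a b with hc | hc | hc
    · exact absurd hab (ne_of_lt (hmono a b ha.1 hc hb.2))
    · exact hc
    · exact absurd hab.symm (ne_of_lt (hmono b a hb.1 hc ha.2))
  have hp2 : p = ∑ k ∈ Finset.Icc 1 m, Polynomial.C (χ (ℓ k)) * Stmt12Aux.Bp (ℓ k) k := by
    rw [hpdef, hF, Finset.sum_insert h0F, Stmt12Aux.Bp_zero 0 (h 0) (hh 0) rfl, mul_zero,
      zero_add, Finset.sum_image hinj]
    apply Finset.sum_congr rfl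
    intro k hk
    rw [Finset.mem_Icc] at hk
    rw [hhℓ k hk.1 hk.2]
  set e : ℕ → ℕ := fun k => ℓ k - k with hedef
  set d : ℕ → ℝ := fun k => χ (ℓ k) * ((k : ℝ) * ((ℓ k).choose k : ℝ)) with hddef
  set q : Polynomial ℝ := Polynomial.derivative p with hqdef
  have hq : q = ∑ k ∈ Finset.Icc 1 m,
      Polynomial.C (d k) * Polynomial.X ^ (k - 1) * (1 - Polynomial.X) ^ (e k) := by
    rw [hqdef, hp2, map_sum]
    apply Finset.sum_congr rfl
    intro k hk
    rw [Finset.mem_Icc] at hk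
    rw [Polynomial.derivative_C_mul,
      Stmt12Aux.deriv_Bp (ℓ k) k hk.1 (by have := hℓlb k hk.1 hk.2; omega), Stmt12Aux.Tp]
    simp only [hddef, hedef, map_mul]
    ring
  have hcoe : ((q : Polynomial ℝ) : PowerSeries ℝ)
      = ∑ k ∈ Finset.Icc 1 m, Stmt12Aux.trm e d k := by
    rw [hq, ← Polynomial.coeToPowerSeries.ringHom_apply, map_sum]
    apply Finset.sum_congr rfl
    intro k _
    simp only [map_mul, map_pow, map_sub, map_one, Polynomial.coeToPowerSeries.ringHom_apply,
      Polynomial.coe_C, Polynomial.coe_X]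
    rw [Stmt12Aux.trm]
    ring
  have hcq : ∀ s, PowerSeries.coeff s (∑ k ∈ Finset.Icc 1 m, Stmt12Aux.trm e d k)
      = q.coeff s := by
    intro s
    rw [← hcoe, Polynomial.coeff_coe]
  have he1 : 1 ≤ e 1 := by
    simp only [hedef]
    omega
  have hemono : ∀ k, 1 ≤ k → k < m → e k ≤ e (k + 1) := by
    intro k hk1 hkm
    have h1 := hinc k hk1 hkm
    have h2 := hℓlb k hk1 (by omega)
    simp only [hedef]
    omega
  have h0 : PowerSeries.coeff 0 (∑ k ∈ Finset.Icc 1 m, Stmt12Aux.trm e d k) = 1 := by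
    rw [hcq 0, hqdef, Polynomial.coeff_derivative, hc1]
    norm_num
  have hsz : ∀ s, 1 ≤ s → s < m →
      PowerSeries.coeff s (∑ k ∈ Finset.Icc 1 m, Stmt12Aux.trm e d k) = 0 := by
    intro s h1 h2
    rw [hcq s, hqdef, Polynomial.coeff_derivative, hck (s + 1) (by omega) (by omega), zero_mul]
  have hfin := Stmt12Aux.core m e d hm he1 hemono h0 hsz
  rw [hcq m, hqdef, Polynomial.coeff_derivative] at hfin
  have hmp : (0 : ℝ) < (m : ℝ) + 1 := by positivity
  have hpc : p.coeff (m + 1) < 0 := by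
    by_contra hge
    push_neg at hge
    nlinarith
  rw [hiter (m + 1)]
  have hfp : (0 : ℝ) < ((m + 1).factorial : ℝ) := by exact_mod_cast (m + 1).factorial_pos
  nlinarith
end

section
/- Let h be a threshold function that is (nonstrictly) increasing and satisfies h(ℓ) ≤ ℓ for all ℓ ≥ 1. Let χ and χ̄ be child distributions such that both systems (χ,h) and (χ̄,h) are m-concordant and have maximum threshold at most m. Assume χ has finite support, that tier_{χ,h}(k) is nonempty for each k ∈ {1,…,m}, that χ̄(ℓ) = 0 for every ℓ ≥ 1 with χ(ℓ) = 0, and that for each k ∈ {1,…,m} there is a scalar α_k with χ̄(p) = α_k·χ(p) for every p ∈ tier_{χ,h}(k). Then χ = χ̄. -/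
open Polynomial Finset

/-- `B≥` as a polynomial. -/
noncomputable def Bpoly (n k : ℕ) : Polynomial ℝ :=
  ∑ j ∈ Finset.Icc k n, Polynomial.C (n.choose j : ℝ) * (1 - Polynomial.X) ^ (n - j)
    * Polynomial.X ^ j

lemma Bpoly_eval (n k : ℕ) (x : ℝ) : (Bpoly n k).eval x = ∑ j ∈ Finset.Icc k n, (n.choose j : ℝ) * x ^ j * (1 - x) ^ (n - j) := by
  simp only [Bpoly, eval_finset_sum, eval_mul, eval_pow, eval_C, eval_sub, eval_one, eval_X]
  exact Finset.sum_congr rfl fun j _ => by ring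

lemma Bpoly_coeff_lt (n k j : ℕ) (hj : j < k) : (Bpoly n k).coeff j = 0 := by
  rw [Bpoly, finset_sum_coeff]
  refine Finset.sum_eq_zero fun i hi => ?_
  rw [coeff_mul_X_pow', if_neg (fun hij => absurd (le_trans (Finset.mem_Icc.1 hi).1 hij) (not_le.2 hj))]

lemma Bpoly_coeff_self (n k : ℕ) : (Bpoly n k).coeff k = (n.choose k : ℝ) := by
  by_cases hkn : k ≤ n
  · rw [Bpoly, finset_sum_coeff, Finset.sum_eq_single k]
    · rw [coeff_mul_X_pow', if_pos le_rfl, Nat.sub_self, coeff_C_mul,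
        coeff_zero_eq_eval_zero]
      simp
    · intro i hi hik
      rw [coeff_mul_X_pow', if_neg]
      have := (Finset.mem_Icc.1 hi).1
      omega
    · intro hk
      exact absurd (Finset.mem_Icc.2 ⟨le_rfl, hkn⟩) hk
  · rw [Bpoly, Finset.Icc_eq_empty (by omega), Finset.sum_empty, coeff_zero,
      Nat.choose_eq_zero_of_lt (by omega), Nat.cast_zero]

lemma iteratedDerivWithin_polyeval (p : Polynomial ℝ) (k : ℕ) :
    ∀ x ∈ Set.Icc (0:ℝ) 1,
      iteratedDerivWithin k (fun y => p.eval y) (Set.Icc 0 1) x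
        = (Polynomial.derivative^[k] p).eval x := by
  induction k with
  | zero => intro x hx; simp
  | succ k ih =>
    intro x hx
    have hu : UniqueDiffOn ℝ (Set.Icc (0:ℝ) 1) := uniqueDiffOn_Icc zero_lt_one
    rw [iteratedDerivWithin_succ,
      derivWithin_congr (fun y hy => ih y hy) (ih x hx),
      Polynomial.derivWithin _ (hu x hx), Function.iterate_succ_apply']

lemma iteratedDeriv_poly_zero (p : Polynomial ℝ) (k : ℕ) :
    iteratedDerivWithin k (fun y => p.eval y) (Set.Icc 0 1) 0 = (k.factorial : ℝ) * p.coeff k := by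
  rw [iteratedDerivWithin_polyeval p k 0 (Set.mem_Icc.2 ⟨le_rfl, zero_le_one⟩),
    ← coeff_zero_eq_eval_zero, Polynomial.coeff_iterate_derivative, zero_add,
    Nat.descFactorial_self, nsmul_eq_mul]

theorem stmt13 (m : ℕ) (hm : 1 ≤ m) (h : ℕ → ℕ) (hh : ∀ n, 1 ≤ h n)
    (hmono : Monotone h) (hle : ∀ n, 1 ≤ n → h n ≤ n)
    (χ χbar : ℕ → ℝ) (hχ : IsChildDist χ) (hχbar : IsChildDist χbar)
    (hconc : Concordant m (Psi χ h)) (hconcbar : Concordant m (Psi χbar h))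
    (hmax : ∀ n, 0 < χ n → h n ≤ m) (hmaxbar : ∀ n, 0 < χbar n → h n ≤ m)
    (hfin : ∃ N, ∀ n, N < n → χ n = 0)
    (htier : ∀ k, 1 ≤ k → k ≤ m → ∃ n, 1 ≤ n ∧ h n = k ∧ 0 < χ n)
    (hzero : ∀ n, 1 ≤ n → χ n = 0 → χbar n = 0)
    (hscal : ∀ k, 1 ≤ k → k ≤ m →
      ∃ α : ℝ, ∀ p, 1 ≤ p → h p = k → 0 < χ p → χbar p = α * χ p) :
    χ = χbar := by
  classical
  obtain ⟨N, hN⟩ := hfin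
  have hNbar : ∀ n, N < n → χbar n = 0 := fun n hn =>
    hzero n (by omega) (hN n hn)
  -- the polynomials representing Psi
  set P : Polynomial ℝ := ∑ n ∈ Finset.range (N + 1), Polynomial.C (χ n) * Bpoly n (h n) with hP
  set Q : Polynomial ℝ := ∑ n ∈ Finset.range (N + 1), Polynomial.C (χbar n) * Bpoly n (h n) with hQ
  have hPsiP : Psi χ h = fun x => P.eval x := by
    funext x
    rw [Psi, tsum_eq_sum (s := Finset.range (N + 1))
      (fun n hn => by rw [hN n (by simpa using hn), zero_mul])]
    rw [hP, Polynomial.eval_finset_sum]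
    exact Finset.sum_congr rfl fun n _ => by
      rw [Polynomial.eval_mul, Polynomial.eval_C, Bpoly_eval]; rfl
  have hPsiQ : Psi χbar h = fun x => Q.eval x := by
    funext x
    rw [Psi, tsum_eq_sum (s := Finset.range (N + 1))
      (fun n hn => by rw [hNbar n (by simpa using hn), zero_mul])]
    rw [hQ, Polynomial.eval_finset_sum]
    exact Finset.sum_congr rfl fun n _ => by
      rw [Polynomial.eval_mul, Polynomial.eval_C, Bpoly_eval]; rfl
  -- the concordance equations give equal coefficients
  have hcoeff : ∀ k, 1 ≤ k → k ≤ m → P.coeff k = Q.coeff k := by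
    intro k hk1 hkm
    have e1 : (k.factorial : ℝ) * P.coeff k = (k.factorial : ℝ) * Q.coeff k := by
      rw [← iteratedDeriv_poly_zero, ← iteratedDeriv_poly_zero, ← hPsiP, ← hPsiQ]
      rcases eq_or_lt_of_le hk1 with h1 | h2
      · rw [← h1, hconc.1 hm, hconcbar.1 hm]
      · rw [hconc.2 k h2 hkm, hconcbar.2 k h2 hkm]
    exact mul_left_cancel₀ (Nat.cast_ne_zero.2 k.factorial_ne_zero) e1
  have hBzero : ∀ k, (Bpoly 0 (h 0)).coeff k = 0 := by
    intro k
    rw [Bpoly, Finset.Icc_eq_empty (by have := hh 0; omega), Finset.sum_empty,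
      Polynomial.coeff_zero]
  -- main induction
  have main : ∀ k, k ≤ m → 1 ≤ k → ∀ n, 1 ≤ n → h n = k → χbar n = χ n := by
    intro k
    induction k using Nat.strong_induction_on with
    | _ k IH =>
      intro hkm hk1
      obtain ⟨α, hα⟩ := hscal k hk1 hkm
      -- the key identity
      have hdiff : Q.coeff k - P.coeff k = 0 := by rw [hcoeff k hk1 hkm, sub_self]
      set S : ℝ := ∑ n ∈ (Finset.range (N + 1)).filter (fun n => 1 ≤ n ∧ h n = k),
        χ n * (n.choose k : ℝ) with hS
      have hsum : Q.coeff k - P.coeff k = (α - 1) * S := by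
        rw [hS, Finset.mul_sum, Finset.sum_filter, hQ, hP, Polynomial.finset_sum_coeff,
          Polynomial.finset_sum_coeff, ← Finset.sum_sub_distrib]
        refine Finset.sum_congr rfl fun n hn => ?_
        rw [Polynomial.coeff_C_mul, Polynomial.coeff_C_mul, ← sub_mul]
        rcases Nat.eq_zero_or_pos n with rfl | hn1
        · rw [hBzero k, mul_zero, if_neg (by omega)]
        rcases lt_trichotomy (h n) k with hlt | heq | hgt
        · rw [IH (h n) (by omega) (by omega) (hh n) n hn1 rfl, sub_self, zero_mul,
            if_neg (by omega)]
        · rw [if_pos ⟨hn1, heq⟩, heq, Bpoly_coeff_self]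
          rcases lt_or_eq_of_le (hχ.1 n) with hpos | hzn
          · rw [hα n hn1 heq hpos]; ring
          · rw [← hzn, hzero n hn1 hzn.symm]; ring
        · rw [Bpoly_coeff_lt n (h n) k hgt, mul_zero, if_neg (by omega)]
      have hSpos : 0 < S := by
        obtain ⟨n₀, hn₀1, hn₀h, hn₀pos⟩ := htier k hk1 hkm
        have hn₀N : n₀ ∈ (Finset.range (N + 1)).filter (fun n => 1 ≤ n ∧ h n = k) := by
          refine Finset.mem_filter.2 ⟨Finset.mem_range.2 ?_, hn₀1, hn₀h⟩
          by_contra hc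
          exact absurd (hN n₀ (by omega)) (ne_of_gt hn₀pos)
        have hterm : 0 < χ n₀ * (n₀.choose k : ℝ) := by
          apply mul_pos hn₀pos
          have : 0 < n₀.choose k := Nat.choose_pos (hn₀h ▸ hle n₀ hn₀1)
          exact_mod_cast this
        refine lt_of_lt_of_le hterm ?_
        rw [hS]
        refine Finset.single_le_sum (f := fun n => χ n * (n.choose k : ℝ)) (fun n hn => ?_) hn₀N
        exact mul_nonneg (hχ.1 n) (Nat.cast_nonneg _)
      have hα1 : α = 1 := by
        have := hsum.symm.trans hdiff
        rcases mul_eq_zero.1 this with h0 | h0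
        · linarith
        · exact absurd h0 (ne_of_gt hSpos)
      intro n hn1 hhn
      rcases lt_or_eq_of_le (hχ.1 n) with hpos | hzn
      · rw [hα n hn1 hhn hpos, hα1, one_mul]
      · rw [← hzn, hzero n hn1 hzn.symm]
  -- conclude for n ≥ 1
  have hpos : ∀ n, 1 ≤ n → χ n = χbar n := by
    intro n hn1
    rcases lt_or_eq_of_le (hχ.1 n) with hp | hz
    · exact (main (h n) (hmax n hp) (hh n) n hn1 rfl).symm
    · rw [← hz, hzero n hn1 hz.symm]
  -- conclude for n = 0 via total mass
  have hsum1 : ∑ n ∈ Finset.range (N + 1), χ n = 1 := by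
    rw [← tsum_eq_sum (L := SummationFilter.unconditional ℕ) (s := Finset.range (N + 1)) (fun n hn => hN n (by simpa using hn)), hχ.2.2]
  have hsum2 : ∑ n ∈ Finset.range (N + 1), χbar n = 1 := by
    rw [← tsum_eq_sum (L := SummationFilter.unconditional ℕ) (s := Finset.range (N + 1)) (fun n hn => hNbar n (by simpa using hn)), hχbar.2.2]
  have h0 : χ 0 = χbar 0 := by
    rw [Finset.sum_range_succ'] at hsum1 hsum2
    have : ∑ i ∈ Finset.range N, χ (i + 1) = ∑ i ∈ Finset.range N, χbar (i + 1) :=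
      Finset.sum_congr rfl fun i _ => hpos (i + 1) (by omega)
    linarith
  funext n
  rcases Nat.eq_zero_or_pos n with rfl | hn1
  · exact h0
  · exact hpos n hn1
end

section
/- Let h: ℕ → ℕ be any function, let t be a locally finite rooted tree, and let s be an admissible subtree of t with respect to h. Then there exists a subtree s' ⊆ s that is also an admissible subtree of t with respect to h and which satisfies n_{s'}(v) = h(n_t(v)) for every vertex v ∈ s'. -/
/-- A rooted tree, modeled as a prefix-closed set of finite sequences of naturals
containing the empty sequence (the root). -/
def IsTree (t : Set (List ℕ)) : Prop :=
  [] ∈ t ∧ ∀ v ∈ t, ∀ u : List ℕ, u <+: v → u ∈ t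

/-- The number of children of the vertex `v` in the tree `t`. -/
noncomputable def nChildren (t : Set (List ℕ)) (v : List ℕ) : ℕ :=
  {i : ℕ | v ++ [i] ∈ t}.ncard

/-- `s` is an admissible subtree of `t` with respect to the threshold function `h`:
it is a subtree of `t` containing the root, and every `v ∈ s` has at least
`h(n_t(v))` children inside `s`. -/
def IsAdmissible (h : ℕ → ℕ) (t s : Set (List ℕ)) : Prop :=
  s ⊆ t ∧ IsTree s ∧ ∀ v ∈ s, h (nChildren t v) ≤ nChildren s v

/-- Auxiliary predicate: membership of the reversed vertex in the pruned tree
determined by the child-choice function `F`. -/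
def Qaux (F : List ℕ → Set ℕ) : List ℕ → Prop
  | [] => True
  | i :: r => i ∈ F r.reverse ∧ Qaux F r

lemma Qaux_suffix (F : List ℕ → Set ℕ) : ∀ l : List ℕ, Qaux F l →
    ∀ l' : List ℕ, l' <:+ l → Qaux F l'
  | [], hQ, l', hl' => by
      rw [List.suffix_nil.mp hl']; exact hQ
  | i :: r, hQ, l', hl' => by
      rcases hl' with ⟨a, ha⟩
      cases a with
      | nil =>
        simp only [List.nil_append] at ha
        exact ha ▸ hQ
      | cons b bs =>
        exact Qaux_suffix F r hQ.2 l' ⟨bs, by simpa using congrArg List.tail ha⟩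

theorem stmt19 (h : ℕ → ℕ) (t : Set (List ℕ)) (ht : IsTree t)
    (hlf : ∀ v ∈ t, {i : ℕ | v ++ [i] ∈ t}.Finite)
    (s : Set (List ℕ)) (hs : IsAdmissible h t s) :
    ∃ s' : Set (List ℕ), s' ⊆ s ∧ IsAdmissible h t s' ∧
      ∀ v ∈ s', nChildren s' v = h (nChildren t v) := by
  classical
  obtain ⟨hsub, ⟨hroot, hpref⟩, hadm⟩ := hs
  have hchoice : ∀ v : List ℕ, ∃ F : Set ℕ, v ∈ s →
      F ⊆ {i : ℕ | v ++ [i] ∈ s} ∧ F.ncard = h (nChildren t v) := by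
    intro v
    by_cases hv : v ∈ s
    · obtain ⟨F, hF1, hF2⟩ := Set.exists_subset_card_eq (hadm v hv)
      exact ⟨F, fun _ => ⟨hF1, hF2⟩⟩
    · exact ⟨∅, fun hv' => absurd hv' hv⟩
  choose F hF using hchoice
  have hF1 : ∀ v ∈ s, F v ⊆ {i : ℕ | v ++ [i] ∈ s} := fun v hv => (hF v hv).1
  have hF2 : ∀ v ∈ s, (F v).ncard = h (nChildren t v) := fun v hv => (hF v hv).2
  set s' : Set (List ℕ) := {v | Qaux F v.reverse} with hs'
  have hss : s' ⊆ s := by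
    intro v hv
    suffices H : ∀ l : List ℕ, Qaux F l → l.reverse ∈ s by
      have := H v.reverse hv; simpa using this
    intro l hl
    induction l with
    | nil => exact hroot
    | cons i r ih =>
      have hr : r.reverse ∈ s := ih hl.2
      have := hF1 r.reverse hr hl.1
      simpa using this
  have hmem : ∀ v : List ℕ, ∀ i : ℕ, v ++ [i] ∈ s' ↔ (i ∈ F v ∧ v ∈ s') := by
    intro v i
    show Qaux F (v ++ [i]).reverse ↔ _
    rw [List.reverse_append]
    show (i ∈ F v.reverse.reverse ∧ Qaux F v.reverse) ↔ _
    rw [List.reverse_reverse]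
    exact Iff.rfl
  have hchild : ∀ v ∈ s', {i : ℕ | v ++ [i] ∈ s'} = F v := by
    intro v hv
    ext i
    simp only [Set.mem_setOf_eq, hmem v i]
    exact ⟨fun h => h.1, fun h => ⟨h, hv⟩⟩
  have hkey : ∀ v ∈ s', nChildren s' v = h (nChildren t v) := by
    intro v hv
    rw [nChildren, hchild v hv, hF2 v (hss hv)]
  refine ⟨s', hss, ⟨hss.trans hsub, ⟨trivial, ?_⟩, fun v hv => (hkey v hv).ge⟩, hkey⟩
  intro v hv u hu
  exact Qaux_suffix F v.reverse hv u.reverse (List.reverse_suffix.mpr hu)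
end
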